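/- arXiv:1611.09643 — 17 statements merged into one kernel-verified Lean document; each statement's English description precedes it below -/
import Mathlib

section
/- Let S be a real n×n matrix (n ≥ 1) with ‖S‖∞ < 1, and let z, ĉ ∈ ℝⁿ satisfy z − S|z| = ĉ. Then there exists an index i ∈ [n] such that sign(z_i) = sign(ĉ_i). -/
theorem stmt_0 {n : ℕ} (hn : 1 ≤ n) (S : Matrix (Fin n) (Fin n) ℝ)
    (hS : ∀ i, ∑ j, |S i j| < 1) (z c : Fin n → ℝ)
    (h : z - S.mulVec (fun i => |z i|) = c) :
    ∃ i : Fin n, Real.sign (z i) = Real.sign (c i) := by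
  have : Nonempty (Fin n) := ⟨⟨0, hn⟩⟩
  by_cases hz : ∀ i, z i = 0
  · obtain ⟨i⟩ := this
    refine ⟨i, ?_⟩
    have hc : c i = 0 := by
      have := congrFun h i
      simp [Matrix.mulVec, dotProduct, hz] at this
      linarith [this]
    rw [hz i, hc]
  · push_neg at hz
    obtain ⟨j, hj⟩ := hz
    obtain ⟨i, -, hi⟩ := Finset.exists_max_image Finset.univ (fun i => |z i|)
      ⟨j, Finset.mem_univ j⟩
    have hzi : 0 < |z i| := lt_of_lt_of_le (abs_pos.mpr hj) (hi j (Finset.mem_univ j))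
    refine ⟨i, ?_⟩
    have hw : |(S.mulVec (fun k => |z k|)) i| < |z i| := by
      calc |(S.mulVec (fun k => |z k|)) i| ≤ ∑ k, abs (S i k * |z k|) := by
            simp only [Matrix.mulVec, dotProduct]; exact Finset.abs_sum_le_sum_abs _ _
        _ ≤ ∑ k, |S i k| * |z i| := by
            apply Finset.sum_le_sum
            intro k _
            rw [abs_mul, abs_abs]
            exact mul_le_mul_of_nonneg_left (hi k (Finset.mem_univ k)) (abs_nonneg _)
        _ = (∑ k, |S i k|) * |z i| := by rw [Finset.sum_mul]
        _ < 1 * |z i| := by exact mul_lt_mul_of_pos_right (hS i) hzi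
        _ = |z i| := one_mul _
    have hc : c i = z i - (S.mulVec (fun k => |z k|)) i := (congrFun h i).symm
    rcases lt_or_gt_of_ne (fun h0 => by simp [h0] at hzi : z i ≠ 0) with hneg | hpos
    · rw [Real.sign_of_neg hneg, Real.sign_of_neg]
      rw [hc]
      rw [abs_of_neg hneg] at hw
      cases abs_lt.mp hw
      linarith
    · rw [Real.sign_of_pos hpos, Real.sign_of_pos]
      rw [hc]
      rw [abs_of_pos hpos] at hw
      cases abs_lt.mp hw
      linarith
end

section
/- Let S be a real n×n matrix and let Σ₁, Σ₂ be signature matrices. Then the set of real numbers λ that are a real eigenvalue of Σ(Σ₁SΣ₂) for some signature matrix Σ is equal to the set of real numbers λ that are a real eigenvalue of ΣS for some signature matrix Σ. (This expresses the invariance ρ₀ˢ(Σ₁SΣ₂) = ρ₀ˢ(S) of the sign-real spectral radius.) -/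
def IsSignature {n : ℕ} (M : Matrix (Fin n) (Fin n) ℝ) : Prop :=
  ∃ σ : Fin n → ℝ, (∀ i, σ i = 1 ∨ σ i = -1) ∧ M = Matrix.diagonal σ

def IsRealEigenvalue {n : ℕ} (A : Matrix (Fin n) (Fin n) ℝ) (lam : ℝ) : Prop :=
  ∃ v : Fin n → ℝ, v ≠ 0 ∧ A.mulVec v = lam • v

lemma IsSignature.mul {n : ℕ} {A B : Matrix (Fin n) (Fin n) ℝ}
    (hA : IsSignature A) (hB : IsSignature B) : IsSignature (A * B) := by
  obtain ⟨σ, hσ, rfl⟩ := hA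
  obtain ⟨τ, hτ, rfl⟩ := hB
  refine ⟨fun i => σ i * τ i, fun i => ?_, Matrix.diagonal_mul_diagonal σ τ⟩
  rcases hσ i with h | h <;> rcases hτ i with h' | h' <;> simp [h, h']

lemma IsSignature.sq {n : ℕ} {A : Matrix (Fin n) (Fin n) ℝ}
    (hA : IsSignature A) : A * A = 1 := by
  obtain ⟨σ, hσ, rfl⟩ := hA
  rw [Matrix.diagonal_mul_diagonal]
  have : (fun i => σ i * σ i) = fun _ : Fin n => (1 : ℝ) := by
    funext i; rcases hσ i with h | h <;> simp [h]
  rw [this, Matrix.diagonal_one]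

lemma key {n : ℕ} (S E₁ E₂ : Matrix (Fin n) (Fin n) ℝ)
    (h₁ : IsSignature E₁) (h₂ : IsSignature E₂) {lam : ℝ}
    (h : ∃ E, IsSignature E ∧ IsRealEigenvalue (E * (E₁ * S * E₂)) lam) :
    ∃ E, IsSignature E ∧ IsRealEigenvalue (E * S) lam := by
  obtain ⟨E, hE, v, hv, hev⟩ := h
  refine ⟨E₂ * E * E₁, (h₂.mul hE).mul h₁, E₂.mulVec v, ?_, ?_⟩
  · intro hw
    apply hv
    have : (E₂ * E₂).mulVec v = E₂.mulVec (E₂.mulVec v) := by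
      rw [← Matrix.mulVec_mulVec]
    rw [h₂.sq, hw, Matrix.mulVec_zero, Matrix.one_mulVec] at this
    exact this
  · have : (E₂ * E * E₁ * S).mulVec (E₂.mulVec v)
        = E₂.mulVec ((E * (E₁ * S * E₂)).mulVec v) := by
      rw [Matrix.mulVec_mulVec]
      simp [Matrix.mul_assoc]
    rw [this, hev, Matrix.mulVec_smul]

theorem stmt_1 {n : ℕ} (S E₁ E₂ : Matrix (Fin n) (Fin n) ℝ)
    (h₁ : IsSignature E₁) (h₂ : IsSignature E₂) :
    {lam : ℝ | ∃ E, IsSignature E ∧ IsRealEigenvalue (E * (E₁ * S * E₂)) lam} =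
      {lam : ℝ | ∃ E, IsSignature E ∧ IsRealEigenvalue (E * S) lam} := by
  ext lam
  simp only [Set.mem_setOf_eq]
  constructor
  · exact fun h => key S E₁ E₂ h₁ h₂ h
  · intro h
    have hS : E₁ * (E₁ * S * E₂) * E₂ = S := by
      calc E₁ * (E₁ * S * E₂) * E₂ = (E₁ * E₁) * S * (E₂ * E₂) := by
            simp [Matrix.mul_assoc]
      _ = S := by rw [h₁.sq, h₂.sq, Matrix.one_mul, Matrix.mul_one]
    have := key (E₁ * S * E₂) E₁ E₂ h₁ h₂ (by rw [hS]; exact h)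
    exact this
end

section
/- Let S be a real n×n matrix. Then every real eigenvalue λ of ΣS, for every signature matrix Σ, satisfies |λ| < 1 if and only if det(I − SΣ) > 0 for every signature matrix Σ. (This is the equivalence ρ₀ˢ(S) < 1 ⇔ det(I − SΣ) > 0 for all signatures Σ.) -/
namespace Stmt3Aux

variable {n : ℕ} (S : Matrix (Fin n) (Fin n) ℝ)

/-- the determinant function on diagonal parameters -/
noncomputable def g (σ : Fin n → ℝ) : ℝ := (1 - S * Matrix.diagonal σ).det

lemma g_affine (σ : Fin n → ℝ) (i : Fin n) (t : ℝ) :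
    g S (Function.update σ i t) =
      (1 - t) * g S (Function.update σ i 0) + t * g S (Function.update σ i 1) := by
  set M : ℝ → Matrix (Fin n) (Fin n) ℝ := fun s => 1 - S * Matrix.diagonal (Function.update σ i s)
  have key : M t = (M 0).updateCol i
      (fun j => (1 - t) • (M 0 j i) + t • (M 1 j i)) := by
    ext j k
    by_cases hk : k = i
    · subst hk
      simp only [Matrix.updateCol_apply, if_pos rfl, M, Matrix.sub_apply,
        Matrix.mul_diagonal, Function.update_self, smul_eq_mul, if_true]
      ring
    · simp only [Matrix.updateCol_apply, if_neg hk, M, Matrix.sub_apply,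
        Matrix.mul_diagonal, Function.update_of_ne hk]
  have h01 : (M 0).updateCol i (fun j => M 1 j i) = M 1 := by
    ext j k
    by_cases hk : k = i
    · subst hk; simp [Matrix.updateCol_apply]
    · simp only [Matrix.updateCol_apply, if_neg hk, M, Matrix.sub_apply,
        Matrix.mul_diagonal, Function.update_of_ne hk]
  have : g S (Function.update σ i t) = (M t).det := rfl
  rw [this, key]
  have hadd := Matrix.det_updateCol_add (M 0) i
      ((1 - t) • fun j => M 0 j i) (t • fun j => M 1 j i)
  have h1 := Matrix.det_updateCol_smul (M 0) i (1 - t) (fun j => M 0 j i)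
  have h2 := Matrix.det_updateCol_smul (M 0) i t (fun j => M 1 j i)
  have hcol : (fun j => (1 - t) • (M 0 j i) + t • (M 1 j i)) =
      ((1 - t) • fun j => M 0 j i) + (t • fun j => M 1 j i) := by
    funext j; simp
  rw [hcol, hadd, h1, h2, Matrix.updateCol_eq_self, h01]
  rfl

lemma g_min (σ : Fin n → ℝ) (i : Fin n) (t : ℝ) (ht : |t| ≤ 1) :
    g S (Function.update σ i 1) ≤ g S (Function.update σ i t) ∨
      g S (Function.update σ i (-1)) ≤ g S (Function.update σ i t) := by
  have e1 := g_affine S σ i t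
  have e2 := g_affine S σ i 1
  have e3 := g_affine S σ i (-1)
  rw [abs_le] at ht
  rcases le_total (g S (Function.update σ i 1)) (g S (Function.update σ i (-1))) with h | h
  · left; nlinarith [ht.1, ht.2]
  · right; nlinarith [ht.1, ht.2]

lemma exists_vertex (s : Finset (Fin n)) :
    ∀ σ : Fin n → ℝ, (∀ i, |σ i| ≤ 1) → (∀ i ∉ s, σ i = 1 ∨ σ i = -1) →
      ∃ τ : Fin n → ℝ, (∀ i, τ i = 1 ∨ τ i = -1) ∧ g S τ ≤ g S σ := by
  induction s using Finset.induction with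
  | empty =>
    intro σ _ h
    exact ⟨σ, fun i => h i (by simp), le_refl _⟩
  | @insert i s hi ih =>
    intro σ hσ h
    have hmin := g_min S σ i (σ i) (hσ i)
    rw [Function.update_eq_self] at hmin
    have step : ∀ c : ℝ, (c = 1 ∨ c = -1) → g S (Function.update σ i c) ≤ g S σ →
        ∃ τ : Fin n → ℝ, (∀ i, τ i = 1 ∨ τ i = -1) ∧ g S τ ≤ g S σ := by
      intro c hc hle
      obtain ⟨τ, hτ, hτle⟩ := ih (Function.update σ i c)
        (by
          intro j
          by_cases hj : j = i
          · subst hj; rcases hc with rfl | rfl <;> simp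
          · rw [Function.update_of_ne hj]; exact hσ j)
        (by
          intro j hj
          by_cases hji : j = i
          · subst hji; simpa using hc
          · rw [Function.update_of_ne hji]
            exact h j (by simp [hji, hj]))
      exact ⟨τ, hτ, le_trans hτle hle⟩
    rcases hmin with hle | hle
    · exact step 1 (Or.inl rfl) hle
    · exact step (-1) (Or.inr rfl) hle

lemma sig_mul_self {σ : Fin n → ℝ} (hσ : ∀ i, σ i = 1 ∨ σ i = -1) :
    Matrix.diagonal σ * Matrix.diagonal σ = 1 := by
  have h1 : (fun i => σ i * σ i) = fun _ => (1 : ℝ) := by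
    funext i; rcases hσ i with h | h <;> simp [h]
  ext i j
  rw [Matrix.diagonal_mul_diagonal]
  show Matrix.diagonal (fun i => σ i * σ i) i j = _
  rw [h1]
  by_cases h : i = j
  · subst h; simp
  · simp [Matrix.diagonal_apply_ne _ h, Matrix.one_apply_ne h]

end Stmt3Aux

open Stmt3Aux in
theorem stmt_3 {n : ℕ} (S : Matrix (Fin n) (Fin n) ℝ) :
    (∀ E, IsSignature E → ∀ lam : ℝ, IsRealEigenvalue (E * S) lam → |lam| < 1) ↔
      (∀ E : Matrix (Fin n) (Fin n) ℝ, IsSignature E → 0 < (1 - S * E).det) := by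
  constructor
  · -- eigenvalues small → determinants positive
    intro hev E hE
    obtain ⟨σ, hσ, rfl⟩ := hE
    by_contra hdet
    push_neg at hdet
    set E := Matrix.diagonal σ with hEdef
    have hEE : E * E = 1 := sig_mul_self hσ
    -- IVT on h t = det (1 - t • (S * E))
    set h : ℝ → ℝ := fun t => (1 - t • (S * E)).det with hh
    have hcont : Continuous h := by
      apply Continuous.matrix_det
      fun_prop
    have h0 : h 0 = 1 := by simp [hh]
    have hmem : (0 : ℝ) ∈ Set.Icc (h 1) (h 0) := by
      constructor
      · simpa [hh] using hdet
      · rw [h0]; norm_num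
    obtain ⟨t, ht, htz⟩ := intermediate_value_Icc' (by norm_num : (0:ℝ) ≤ 1)
      hcont.continuousOn hmem
    have ht0 : t ≠ 0 := by
      intro h'
      rw [h'] at htz
      rw [h0] at htz
      norm_num at htz
    have htpos : 0 < t := lt_of_le_of_ne ht.1 (Ne.symm ht0)
    -- get eigenvector
    have : ∃ v, v ≠ 0 ∧ (1 - t • (S * E)).mulVec v = 0 :=
      Matrix.exists_mulVec_eq_zero_iff.mpr htz
    obtain ⟨v, hv0, hv⟩ := this
    have hSEv : (S * E).mulVec v = (1 / t) • v := by
      have : (1 : Matrix (Fin n) (Fin n) ℝ).mulVec v - (t • (S * E)).mulVec v = 0 := by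
        rw [← Matrix.sub_mulVec]; exact hv
      rw [Matrix.one_mulVec, Matrix.smul_mulVec] at this
      have h2 : t • (S * E).mulVec v = v := by
        have := sub_eq_zero.mp this
        exact this.symm
      have := congrArg (fun w => (1 / t) • w) h2
      simpa [smul_smul, one_div, inv_mul_cancel₀ ht0] using this
    -- transfer to E * S
    have hw0 : E.mulVec v ≠ 0 := by
      intro h'
      apply hv0
      have : E.mulVec (E.mulVec v) = v := by
        rw [Matrix.mulVec_mulVec, hEE, Matrix.one_mulVec]
      rw [h', Matrix.mulVec_zero] at this
      exact this.symm
    have heig : (E * S).mulVec (E.mulVec v) = (1 / t) • E.mulVec v := by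
      rw [Matrix.mulVec_mulVec]
      have : E * S * E = E * (S * E) := by rw [Matrix.mul_assoc]
      rw [this, ← Matrix.mulVec_mulVec, hSEv, Matrix.mulVec_smul]
    have := hev E ⟨σ, hσ, rfl⟩ (1 / t) ⟨E.mulVec v, hw0, heig⟩
    have h1t : 1 ≤ 1 / t := by
      rw [le_div_iff₀ htpos]
      simpa using ht.2
    rw [abs_of_pos (by positivity)] at this
    linarith
  · -- determinants positive → eigenvalues small
    intro hdet E hE lam hlam
    obtain ⟨σ, hσ, rfl⟩ := hE
    set E := Matrix.diagonal σ with hEdef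
    have hEE : E * E = 1 := sig_mul_self hσ
    by_contra habs
    push_neg at habs
    have hlam0 : lam ≠ 0 := by
      intro h'; rw [h'] at habs; simp at habs; linarith
    obtain ⟨v, hv0, hv⟩ := hlam
    -- eigenvector for S * E
    have hw0 : E.mulVec v ≠ 0 := by
      intro h'
      apply hv0
      have : E.mulVec (E.mulVec v) = v := by
        rw [Matrix.mulVec_mulVec, hEE, Matrix.one_mulVec]
      rw [h', Matrix.mulVec_zero] at this
      exact this.symm
    have heig : (S * E).mulVec (E.mulVec v) = lam • E.mulVec v := by
      rw [Matrix.mulVec_mulVec, Matrix.mul_assoc, hEE, Matrix.mul_one]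
      have : E.mulVec ((E * S).mulVec v) = E.mulVec (lam • v) := by rw [hv]
      rw [Matrix.mulVec_mulVec, ← Matrix.mul_assoc, hEE, Matrix.one_mul,
        Matrix.mulVec_smul] at this
      exact this
    -- det (1 - S * diagonal ((1/lam) • σ)) = 0
    have hdet0 : g S ((1 / lam) • σ) = 0 := by
      have hker : (1 - S * Matrix.diagonal ((1 / lam) • σ)).mulVec (E.mulVec v) = 0 := by
        have hd : Matrix.diagonal ((1 / lam) • σ) = (1 / lam) • E := by
          rw [hEdef, Matrix.diagonal_smul]
        rw [hd, Matrix.sub_mulVec, Matrix.one_mulVec, Matrix.mul_smul,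
          Matrix.smul_mulVec, heig, smul_smul, one_div,
          inv_mul_cancel₀ hlam0, one_smul, sub_self]
      rw [g, ← Matrix.exists_mulVec_eq_zero_iff]
      exact ⟨E.mulVec v, hw0, hker⟩
    have hbound : ∀ i, |((1 / lam) • σ) i| ≤ 1 := by
      intro i
      have h1 : |σ i| = 1 := by rcases hσ i with h | h <;> simp [h]
      have : |((1 / lam) • σ) i| = |1 / lam| * |σ i| := by
        simp [abs_mul]
      rw [this, h1, mul_one, abs_div, abs_one]
      rw [div_le_one (abs_pos.mpr hlam0)]
      linarith
    obtain ⟨τ, hτ, hτle⟩ := exists_vertex S Finset.univ ((1 / lam) • σ) hbound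
      (fun i hi => absurd (Finset.mem_univ i) hi)
    have := hdet (Matrix.diagonal τ) ⟨τ, hτ, rfl⟩
    rw [hdet0] at hτle
    exact absurd (lt_of_lt_of_le this hτle) (lt_irrefl 0)
end

section
/- Let S be a real n×n matrix. Then det(I − SΣ) > 0 for every signature matrix Σ if and only if det(I − SD) > 0 for every real diagonal n×n matrix D all of whose diagonal entries have absolute value at most 1. -/
private lemma matrix_eq_updateCol {n : ℕ} (S : Matrix (Fin n) (Fin n) ℝ)
    (d : Fin n → ℝ) (i : Fin n) (t : ℝ) :
    (1 - S * Matrix.diagonal (Function.update d i t)) =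
      Matrix.updateCol (1 - S * Matrix.diagonal d) i
        (fun k => (if k = i then (1:ℝ) else 0) - t * S k i) := by
  ext k j
  simp only [Matrix.updateCol_apply, Matrix.sub_apply, Matrix.mul_diagonal,
    Matrix.one_apply]
  by_cases h : j = i
  · subst h
    simp [Function.update_self, mul_comm]
  · simp [h, Function.update_of_ne h]

private lemma det_affine {n : ℕ} (S : Matrix (Fin n) (Fin n) ℝ)
    (d : Fin n → ℝ) (i : Fin n) (t : ℝ) :
    (1 - S * Matrix.diagonal (Function.update d i t)).det
      = ((1+t)/2) * (1 - S * Matrix.diagonal (Function.update d i 1)).det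
      + ((1-t)/2) * (1 - S * Matrix.diagonal (Function.update d i (-1))).det := by
  rw [matrix_eq_updateCol, matrix_eq_updateCol, matrix_eq_updateCol]
  have hcol : (fun k => (if k = i then (1:ℝ) else 0) - t * S k i)
      = ((1+t)/2) • (fun k => (if k = i then (1:ℝ) else 0) - 1 * S k i)
        + ((1-t)/2) • (fun k => (if k = i then (1:ℝ) else 0) - (-1) * S k i) := by
    funext k
    simp only [Pi.add_apply, Pi.smul_apply, smul_eq_mul]
    ring
  rw [hcol, Matrix.det_updateCol_add, Matrix.det_updateCol_smul,
    Matrix.det_updateCol_smul]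

theorem stmt_4 {n : ℕ} (S : Matrix (Fin n) (Fin n) ℝ) :
    (∀ E : Matrix (Fin n) (Fin n) ℝ, IsSignature E → 0 < (1 - S * E).det) ↔
      (∀ d : Fin n → ℝ, (∀ i, |d i| ≤ 1) → 0 < (1 - S * Matrix.diagonal d).det) := by
  constructor
  · intro h
    -- strengthen: induction on number of free coordinates
    suffices H : ∀ m : ℕ, ∀ d : Fin n → ℝ, (∀ i, |d i| ≤ 1) →
        (∀ i : Fin n, m ≤ i.val → d i = 1 ∨ d i = -1) →
        0 < (1 - S * Matrix.diagonal d).det by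
      intro d hd
      exact H n d hd (fun i hi => absurd hi (by omega))
    intro m
    induction m with
    | zero =>
      intro d hd hsig
      exact h _ ⟨d, fun i => hsig i (Nat.zero_le _), rfl⟩
    | succ m ih =>
      intro d hd hsig
      by_cases hm : m < n
      · set i : Fin n := ⟨m, hm⟩
        have hd1 : ∀ j, |Function.update d i 1 j| ≤ 1 := by
          intro j
          by_cases hj : j = i
          · subst hj; simp
          · simp [Function.update_of_ne hj, hd j]
        have hdneg : ∀ j, |Function.update d i (-1) j| ≤ 1 := by
          intro j
          by_cases hj : j = i
          · subst hj; simp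
          · simp [Function.update_of_ne hj, hd j]
        have hs1 : ∀ j : Fin n, m ≤ j.val → Function.update d i 1 j = 1 ∨
            Function.update d i 1 j = -1 := by
          intro j hj
          by_cases hji : j = i
          · subst hji; simp
          · rw [Function.update_of_ne hji]
            apply hsig
            have : j.val ≠ m := fun hc => hji (Fin.ext hc)
            omega
        have hsneg : ∀ j : Fin n, m ≤ j.val → Function.update d i (-1) j = 1 ∨
            Function.update d i (-1) j = -1 := by
          intro j hj
          by_cases hji : j = i
          · subst hji; simp
          · rw [Function.update_of_ne hji]
            apply hsig
            have : j.val ≠ m := fun hc => hji (Fin.ext hc)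
            omega
        have p1 := ih _ hd1 hs1
        have p2 := ih _ hdneg hsneg
        have hdeq : d = Function.update d i (d i) := by
          funext j; by_cases hj : j = i
          · subst hj; simp
          · simp [Function.update_of_ne hj]
        have habs := hd i
        have h1 : (0:ℝ) ≤ (1 + d i)/2 := by
          rw [abs_le] at habs; linarith [habs.1]
        have h2 : (0:ℝ) ≤ (1 - d i)/2 := by
          rw [abs_le] at habs; linarith [habs.2]
        have hsum : (1 + d i)/2 + (1 - d i)/2 = 1 := by ring
        calc (0:ℝ) < ((1 + d i)/2) * (1 - S * Matrix.diagonal (Function.update d i 1)).det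
              + ((1 - d i)/2) * (1 - S * Matrix.diagonal (Function.update d i (-1))).det := by
              rcases eq_or_lt_of_le h1 with h1' | h1'
              · have : (1 - d i)/2 = 1 := by linarith
                rw [← h1', this]; simpa using p2
              · rcases eq_or_lt_of_le h2 with h2' | h2'
                · have : (1 + d i)/2 = 1 := by linarith
                  rw [← h2', this]; simpa using p1
                · positivity
          _ = (1 - S * Matrix.diagonal (Function.update d i (d i))).det :=
              (det_affine S d i (d i)).symm
          _ = (1 - S * Matrix.diagonal d).det := by rw [← hdeq]
      · apply ih d hd
        intro j hj
        apply hsig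
        have := j.isLt
        omega
  · intro h E hE
    obtain ⟨σ, hσ, rfl⟩ := hE
    apply h
    intro i
    rcases hσ i with h1 | h1 <;> simp [h1]
end

section
/- Let S be a real n×n matrix. Then every real eigenvalue λ of ΣS, for every signature matrix Σ, satisfies |λ| < 1 if and only if for every ĉ ∈ ℝⁿ there exists a unique z ∈ ℝⁿ with z − S|z| = ĉ. (This is the equivalence ρ₀ˢ(S) < 1 ⇔ unique solvability of the absolute value equation for all right-hand sides.) -/
namespace AVEaux

lemma pair_lemma (u v : ℝ) (h : |v| ≤ |u|) : ∃ a b : ℝ, a - b = u ∧ |a| - |b| = v := by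
  rcases le_or_gt 0 u with hu | hu
  · rw [abs_of_nonneg hu] at h
    obtain ⟨h1, h2⟩ := abs_le.mp h
    exact ⟨(u + v) / 2, (v - u) / 2, by ring, by
      rw [abs_of_nonneg (by linarith), abs_of_nonpos (by linarith)]; ring⟩
  · rw [abs_of_neg hu] at h
    obtain ⟨h1, h2⟩ := abs_le.mp h
    exact ⟨(u - v) / 2, -((u + v) / 2), by ring, by
      rw [abs_of_nonpos (by linarith), abs_of_nonneg (by linarith)]; ring⟩

variable {n : ℕ}

lemma diag_mulVec (d u : Fin n → ℝ) :
    (Matrix.diagonal d).mulVec u = fun i => d i * u i := by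
  funext i
  exact Matrix.mulVec_diagonal d u i

lemma matM_mulVec (S : Matrix (Fin n) (Fin n) ℝ) (d u : Fin n → ℝ) :
    (1 - S * Matrix.diagonal d).mulVec u = u - S.mulVec (fun i => d i * u i) := by
  rw [Matrix.sub_mulVec, Matrix.one_mulVec, ← Matrix.mulVec_mulVec, diag_mulVec]

def Reg (S : Matrix (Fin n) (Fin n) ℝ) : Prop :=
  ∀ d : Fin n → ℝ, (∀ i, |d i| ≤ 1) → ∀ u : Fin n → ℝ,
    u = S.mulVec (fun i => d i * u i) → u = 0

lemma ker_lemma {S : Matrix (Fin n) (Fin n) ℝ} (hS : Reg S) (u ψ : Fin n → ℝ)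
    (hb : ∀ i, |ψ i| ≤ |u i|) (he : u = S.mulVec ψ) : u = 0 := by
  set d : Fin n → ℝ := fun i => if u i = 0 then 0 else ψ i / u i with hd
  have hψ : ∀ i, ψ i = d i * u i := by
    intro i
    by_cases h : u i = 0
    · have h0 : |ψ i| ≤ 0 := by simpa [h] using hb i
      have : ψ i = 0 := abs_nonpos_iff.mp h0
      simp [hd, h, this]
    · rw [hd]
      simp only [h, if_false]
      field_simp
  have hψfun : (fun i => d i * u i) = ψ := funext fun i => (hψ i).symm
  refine hS d ?_ u (by rw [hψfun]; exact he)
  intro i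
  by_cases h : u i = 0
  · simp [hd, h]
  · rw [hd]
    simp only [h, if_false, abs_div]
    rw [div_le_one (abs_pos.mpr h)]
    exact hb i

lemma mulVec_sub_vec (S : Matrix (Fin n) (Fin n) ℝ) (x y : Fin n → ℝ) :
    S.mulVec x - S.mulVec y = S.mulVec (fun i => x i - y i) := by
  rw [← Matrix.mulVec_sub]
  rfl

lemma exists_sol {S : Matrix (Fin n) (Fin n) ℝ} (hS : Reg S) :
    ∀ J : Finset (Fin n), ∀ e : Fin n → ℝ, (∀ i, |e i| ≤ 1) → ∀ c : Fin n → ℝ,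
      ∃ z : Fin n → ℝ, z - S.mulVec (fun i => if i ∈ J then |z i| else e i * z i) = c := by
  intro J
  induction J using Finset.induction_on with
  | empty =>
    intro e he c
    have hinj : Function.Injective ((1 - S * Matrix.diagonal e).mulVecLin) := by
      intro x y hxy
      have h0 : (1 - S * Matrix.diagonal e).mulVecLin (x - y) = 0 := by
        rw [map_sub, hxy, sub_self]
      have h1 : (x - y) = S.mulVec (fun i => e i * (x - y) i) := by
        have := h0
        rw [Matrix.mulVecLin_apply, matM_mulVec] at this
        have := sub_eq_zero.mp this
        exact this
      have := hS e he (x - y) h1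
      exact sub_eq_zero.mp this
    obtain ⟨z, hz⟩ := LinearMap.injective_iff_surjective.mp hinj c
    refine ⟨z, ?_⟩
    rw [Matrix.mulVecLin_apply, matM_mulVec] at hz
    simpa using hz
  | @insert j J' hj IH =>
    intro e he c
    have hep : ∀ i, |Function.update e j 1 i| ≤ 1 := by
      intro i
      rcases eq_or_ne i j with rfl | h
      · simp
      · simp [Function.update_apply, h, he i]
    have hem : ∀ i, |Function.update e j (-1) i| ≤ 1 := by
      intro i
      rcases eq_or_ne i j with rfl | h
      · simp
      · simp [Function.update_apply, h, he i]
    obtain ⟨wp, hwp⟩ := IH (Function.update e j 1) hep c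
    obtain ⟨wm, hwm⟩ := IH (Function.update e j (-1)) hem c
    rcases le_or_gt 0 (wp j) with h1 | h1
    · refine ⟨wp, ?_⟩
      rw [← hwp]
      have harg : (fun i => if i ∈ insert j J' then |wp i| else e i * wp i) =
          (fun i => if i ∈ J' then |wp i| else Function.update e j 1 i * wp i) := by
        funext i
        rcases eq_or_ne i j with rfl | h
        · simp [hj, abs_of_nonneg h1]
        · by_cases hiJ : i ∈ J'
          · simp [hiJ, h, Finset.mem_insert]
          · simp [hiJ, h, Finset.mem_insert, Function.update_apply]
      rw [harg]
    rcases le_or_gt (wm j) 0 with h2 | h2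
    · refine ⟨wm, ?_⟩
      rw [← hwm]
      have harg : (fun i => if i ∈ insert j J' then |wm i| else e i * wm i) =
          (fun i => if i ∈ J' then |wm i| else Function.update e j (-1) i * wm i) := by
        funext i
        rcases eq_or_ne i j with rfl | h
        · simp [hj, abs_of_nonpos h2]
        · by_cases hiJ : i ∈ J'
          · simp [hiJ, h, Finset.mem_insert]
          · simp [hiJ, h, Finset.mem_insert, Function.update_apply]
      rw [harg]
    · exfalso
      set u : Fin n → ℝ := wm - wp with hu_def
      set ψ : Fin n → ℝ := fun i =>
        (if i ∈ J' then |wm i| else Function.update e j (-1) i * wm i) -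
        (if i ∈ J' then |wp i| else Function.update e j 1 i * wp i) with hψ_def
      have hu : u = S.mulVec ψ := by
        have hsub : (wm - S.mulVec (fun i => if i ∈ J' then |wm i| else Function.update e j (-1) i * wm i))
            - (wp - S.mulVec (fun i => if i ∈ J' then |wp i| else Function.update e j 1 i * wp i)) = 0 := by
          rw [hwm, hwp, sub_self]
        have : u - (S.mulVec (fun i => if i ∈ J' then |wm i| else Function.update e j (-1) i * wm i)
            - S.mulVec (fun i => if i ∈ J' then |wp i| else Function.update e j 1 i * wp i)) = 0 := by
          rw [hu_def, ← hsub]; abel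
        rw [mulVec_sub_vec] at this
        have := sub_eq_zero.mp this
        exact this
      have hb : ∀ i, |ψ i| ≤ |u i| := by
        intro i
        rw [hψ_def, hu_def]
        by_cases hiJ : i ∈ J'
        · simp only [hiJ, if_true, Pi.sub_apply]
          exact abs_abs_sub_abs_le_abs_sub _ _
        · rcases eq_or_ne i j with h | h
          · subst h
            simp only [hiJ, if_false, Function.update_self, Pi.sub_apply]
            rw [abs_of_pos (by linarith : (0:ℝ) < wm i - wp i)]
            rw [abs_le]
            constructor <;> nlinarith
          · simp only [hiJ, if_false, Function.update_apply, h, if_false, Pi.sub_apply]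
            rw [← mul_sub, abs_mul]
            calc |e i| * |wm i - wp i| ≤ 1 * |wm i - wp i| :=
                  mul_le_mul_of_nonneg_right (he i) (abs_nonneg _)
              _ = |wm i - wp i| := one_mul _
      have h0 := ker_lemma hS u ψ hb hu
      have : u j = 0 := by rw [h0]; rfl
      rw [hu_def] at this
      have : wm j - wp j = 0 := this
      linarith

lemma det_affine (S : Matrix (Fin n) (Fin n) ℝ) (d : Fin n → ℝ) (j : Fin n) :
    ∃ α β : ℝ, ∀ t : ℝ, (1 - S * Matrix.diagonal (Function.update d j t)).det = α + β * t := by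
  set M : Matrix (Fin n) (Fin n) ℝ := 1 - S * Matrix.diagonal (Function.update d j 0) with hM_def
  refine ⟨M.det, (M.updateCol j (fun i => -S i j)).det, ?_⟩
  intro t
  have hM : (1 - S * Matrix.diagonal (Function.update d j t)) =
      M.updateCol j ((fun i => M i j) + t • (fun i => -S i j)) := by
    ext i k
    by_cases hk : k = j
    · subst hk
      simp only [Matrix.updateCol_apply, if_true, Pi.add_apply, Pi.smul_apply, smul_eq_mul,
        hM_def, Matrix.sub_apply, Matrix.mul_diagonal, Matrix.one_apply,
        Function.update_self]
      ring
    · simp only [Matrix.updateCol_apply, hk, if_false, hM_def, Matrix.sub_apply,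
        Matrix.mul_diagonal, Matrix.one_apply, Function.update_apply]
  rw [hM, Matrix.det_updateCol_add, Matrix.det_updateCol_smul,
    Matrix.updateCol_eq_self]
  ring

lemma vertex_min (S : Matrix (Fin n) (Fin n) ℝ) :
    ∀ T : Finset (Fin n), ∀ d : Fin n → ℝ, (∀ i, |d i| ≤ 1) →
      ∃ d' : Fin n → ℝ, (∀ i, |d' i| ≤ 1) ∧ (∀ i ∈ T, d' i = 1 ∨ d' i = -1) ∧
        (1 - S * Matrix.diagonal d').det ≤ (1 - S * Matrix.diagonal d).det := by
  intro T
  induction T using Finset.induction_on with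
  | empty =>
    intro d hd
    exact ⟨d, hd, by simp, le_refl _⟩
  | @insert j T' hj IH =>
    intro d hd
    obtain ⟨d'', hd''b, hd''s, hd''le⟩ := IH d hd
    obtain ⟨α, β, haff⟩ := det_affine S d'' j
    set t : ℝ := if 0 ≤ β then -1 else 1 with ht_def
    refine ⟨Function.update d'' j t, ?_, ?_, ?_⟩
    · intro i
      rcases eq_or_ne i j with h | h
      · subst h
        rw [Function.update_self, ht_def]
        split <;> norm_num
      · rw [Function.update_apply]
        simp [h, hd''b i]
    · intro i hi
      rcases Finset.mem_insert.mp hi with h | h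
      · subst h
        rw [Function.update_self, ht_def]
        split
        · right; rfl
        · left; rfl
      · have hij : i ≠ j := fun hc => hj (hc ▸ h)
        rw [Function.update_apply]
        simp only [hij, if_false]
        exact hd''s i h
    · have h1 : (1 - S * Matrix.diagonal d'').det = α + β * d'' j := by
        have := haff (d'' j)
        rwa [Function.update_eq_self] at this
      have h2 : (1 - S * Matrix.diagonal (Function.update d'' j t)).det = α + β * t :=
        haff t
      have hdj := abs_le.mp (hd''b j)
      have h3 : α + β * t ≤ α + β * d'' j := by
        rw [ht_def]
        split
        · nlinarith
        · nlinarith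
      rw [h2]
      calc α + β * t ≤ α + β * d'' j := h3
        _ = (1 - S * Matrix.diagonal d'').det := h1.symm
        _ ≤ (1 - S * Matrix.diagonal d).det := hd''le

lemma reg_of_bound {S : Matrix (Fin n) (Fin n) ℝ}
    (H : ∀ E, IsSignature E → ∀ lam : ℝ, IsRealEigenvalue (E * S) lam → |lam| < 1) :
    Reg S := by
  intro d hd u hu
  by_contra hu0
  have hdet : (1 - S * Matrix.diagonal d).det = 0 := by
    rw [← Matrix.exists_mulVec_eq_zero_iff]
    exact ⟨u, hu0, by rw [matM_mulVec, ← hu, sub_self]⟩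
  obtain ⟨σ, hσb, hσs, hσle⟩ := vertex_min S Finset.univ d hd
  have hσsigns : ∀ i, σ i = 1 ∨ σ i = -1 := fun i => hσs i (Finset.mem_univ i)
  rw [hdet] at hσle
  have hcont : Continuous (fun μ : ℝ => (1 - S * Matrix.diagonal (μ • σ)).det) := by
    apply Continuous.matrix_det
    apply Continuous.sub continuous_const
    apply Continuous.matrix_mul continuous_const
    apply Continuous.matrix_diagonal
    exact continuous_id.smul continuous_const
  have h0val : (1 - S * Matrix.diagonal ((0:ℝ) • σ)).det = 1 := by
    have h1 : (0:ℝ) • σ = 0 := zero_smul _ _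
    have h2 : Matrix.diagonal (0 : Fin n → ℝ) = 0 := by
      ext i k
      simp [Matrix.diagonal_apply]
    rw [h1, h2, mul_zero, sub_zero, Matrix.det_one]
  obtain ⟨μ, hμ0, hμ1, hμdet⟩ :
      ∃ μ : ℝ, 0 < μ ∧ μ ≤ 1 ∧ (1 - S * Matrix.diagonal (μ • σ)).det = 0 := by
    rcases eq_or_lt_of_le hσle with h | h
    · refine ⟨1, one_pos, le_refl _, ?_⟩
      rw [show (1:ℝ) • σ = σ from one_smul _ _]
      exact h
    · have hmem : (0:ℝ) ∈ Set.Icc ((fun μ : ℝ => (1 - S * Matrix.diagonal (μ • σ)).det) 1)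
          ((fun μ : ℝ => (1 - S * Matrix.diagonal (μ • σ)).det) 0) := by
        constructor
        · show (0:ℝ) ≥ (1 - S * Matrix.diagonal ((1:ℝ) • σ)).det
          rw [one_smul]
          exact h.le
        · show (0:ℝ) ≤ (1 - S * Matrix.diagonal ((0:ℝ) • σ)).det
          rw [h0val]; norm_num
      obtain ⟨μ, hμmem, hμeq⟩ := intermediate_value_Icc' (by norm_num : (0:ℝ) ≤ 1)
        hcont.continuousOn hmem
      have hμeq' : (1 - S * Matrix.diagonal (μ • σ)).det = 0 := hμeq
      refine ⟨μ, ?_, hμmem.2, hμeq'⟩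
      rcases eq_or_lt_of_le hμmem.1 with h0 | h0
      · exfalso
        rw [← h0, h0val] at hμeq'
        norm_num at hμeq'
      · exact h0
  obtain ⟨w, hw0, hww⟩ := Matrix.exists_mulVec_eq_zero_iff.mpr hμdet
  have hwS : w = S.mulVec (fun i => μ * σ i * w i) := by
    rw [matM_mulVec] at hww
    have h := sub_eq_zero.mp hww
    have harg : (fun i => (μ • σ) i * w i) = (fun i => μ * σ i * w i) := by
      funext i
      simp [mul_assoc]
    rw [← harg]
    exact h
  set x : Fin n → ℝ := fun i => μ * σ i * w i with hx_def
  have hx0 : x ≠ 0 := by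
    intro hx
    apply hw0
    funext i
    show w i = (0:ℝ)
    have hxi : μ * σ i * w i = 0 := congrFun hx i
    rcases mul_eq_zero.mp hxi with h' | h'
    · exfalso
      rcases hσsigns i with h | h <;> rw [h] at h' <;> nlinarith
    · exact h'
  have heig : (Matrix.diagonal σ * S).mulVec x = (1 / μ) • x := by
    rw [← Matrix.mulVec_mulVec, ← hwS, diag_mulVec]
    funext i
    rw [hx_def]
    simp only [Pi.smul_apply, smul_eq_mul]
    field_simp
  have hlt := H (Matrix.diagonal σ) ⟨σ, hσsigns, rfl⟩ (1 / μ) ⟨x, hx0, heig⟩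
  rw [abs_of_pos (by positivity : (0:ℝ) < 1 / μ)] at hlt
  have h1μ : (1:ℝ) ≤ 1 / μ := by
    rw [le_div_iff₀ hμ0]
    linarith
  linarith

end AVEaux

theorem stmt_5 {n : ℕ} (S : Matrix (Fin n) (Fin n) ℝ) :
    (∀ E, IsSignature E → ∀ lam : ℝ, IsRealEigenvalue (E * S) lam → |lam| < 1) ↔
      (∀ c : Fin n → ℝ, ∃! z : Fin n → ℝ, z - S.mulVec (fun i => |z i|) = c) := by
  constructor
  · intro H c
    have hreg := AVEaux.reg_of_bound H
    obtain ⟨z, hz⟩ := AVEaux.exists_sol hreg Finset.univ 0 (by intro i; norm_num) c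
    simp only [Finset.mem_univ, if_true] at hz
    refine ⟨z, hz, ?_⟩
    intro y hy
    have hsub : (y - S.mulVec (fun i => |y i|)) - (z - S.mulVec (fun i => |z i|)) = 0 := by
      rw [hy, hz, sub_self]
    have heq : (y - z) = S.mulVec (fun i => |y i| - |z i|) := by
      have h2 : (y - z) - (S.mulVec (fun i => |y i|) - S.mulVec (fun i => |z i|)) = 0 := by
        rw [← hsub]; abel
      rw [AVEaux.mulVec_sub_vec] at h2
      exact sub_eq_zero.mp h2
    have := AVEaux.ker_lemma hreg (y - z) (fun i => |y i| - |z i|)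
      (fun i => abs_abs_sub_abs_le_abs_sub _ _) heq
    exact sub_eq_zero.mp this
  · intro H E hE lam hlam
    by_contra hcon
    push_neg at hcon
    obtain ⟨σ, hσ, rfl⟩ := hE
    obtain ⟨v, hv0, hv⟩ := hlam
    have hσsq : ∀ i, σ i * σ i = 1 := by
      intro i; rcases hσ i with h | h <;> rw [h] <;> ring
    have hσabs : ∀ i, |σ i| = 1 := by
      intro i; rcases hσ i with h | h <;> rw [h] <;> norm_num
    have hSv : ∀ i, (S.mulVec v) i = σ i * (lam * v i) := by
      intro i
      have h1 : ((Matrix.diagonal σ * S).mulVec v) i = lam * v i := by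
        rw [hv]; rfl
      rw [← Matrix.mulVec_mulVec, AVEaux.diag_mulVec] at h1
      have h1' : σ i * (S.mulVec v) i = lam * v i := h1
      have h2 : σ i * (σ i * (S.mulVec v) i) = σ i * (lam * v i) := by rw [h1']
      rwa [← mul_assoc, hσsq i, one_mul] at h2
    have hlam0 : lam ≠ 0 := by
      intro h; rw [h] at hcon; norm_num at hcon
    have hbound : ∀ i, |v i| ≤ |(S.mulVec v) i| := by
      intro i
      rw [hSv i, abs_mul, abs_mul, hσabs i, one_mul]
      nlinarith [abs_nonneg (v i), abs_nonneg lam]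
    have hpl : ∀ i, ∃ a b : ℝ, a - b = (S.mulVec v) i ∧ |a| - |b| = v i :=
      fun i => AVEaux.pair_lemma _ _ (hbound i)
    choose a b hab habs using hpl
    have hSv0 : S.mulVec v ≠ 0 := by
      intro h
      apply hv0
      funext i
      show v i = (0:ℝ)
      have h1 : (S.mulVec v) i = 0 := congrFun h i
      rw [hSv i] at h1
      rcases mul_eq_zero.mp h1 with h' | h'
      · exfalso
        rcases hσ i with hs | hs <;> rw [hs] at h' <;> norm_num at h'
      · rcases mul_eq_zero.mp h' with h'' | h''
        · exact absurd h'' hlam0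
        · exact h''
    have hfafb : a - S.mulVec (fun i => |a i|) = b - S.mulVec (fun i => |b i|) := by
      have h1 : (fun i => |a i| - |b i|) = v := funext habs
      have h2 : S.mulVec (fun i => |a i|) - S.mulVec (fun i => |b i|) = S.mulVec v := by
        rw [AVEaux.mulVec_sub_vec, h1]
      have h3 : (a : Fin n → ℝ) - b = S.mulVec v := funext hab
      have : (a - S.mulVec (fun i => |a i|)) - (b - S.mulVec (fun i => |b i|)) = 0 := by
        have : (a - S.mulVec (fun i => |a i|)) - (b - S.mulVec (fun i => |b i|)) =
            (a - b) - (S.mulVec (fun i => |a i|) - S.mulVec (fun i => |b i|)) := by abel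
        rw [this, h2, h3, sub_self]
      exact sub_eq_zero.mp this
    have hne : (a : Fin n → ℝ) ≠ b := by
      intro h
      apply hSv0
      have h3 : (a : Fin n → ℝ) - b = S.mulVec v := funext hab
      rw [h, sub_self] at h3
      exact h3.symm
    obtain ⟨z, hz, huniq⟩ := H (a - S.mulVec (fun i => |a i|))
    have ha := huniq a rfl
    have hb := huniq b hfafb.symm
    exact hne (ha.trans hb.symm)
end

section
/- Let S be a real n×n matrix such that I − S is invertible. Then the matrix (I − S)⁻¹(I + S) is a P-matrix if and only if for every ĉ ∈ ℝⁿ there exists a unique z ∈ ℝⁿ with z + S|z| = ĉ. -/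
open Matrix

namespace AVE

variable {n : ℕ}

def Hcube (S : Matrix (Fin n) (Fin n) ℝ) : Prop :=
  ∀ d : Fin n → ℝ, (∀ i, |d i| ≤ 1) → (1 + S * Matrix.diagonal d).det ≠ 0


lemma det_key (S : Matrix (Fin n) (Fin n) ℝ) (hinv : IsUnit (1 - S)) (J : Finset (Fin n)) :
    (1 - S).det *
        (((1 - S)⁻¹ * (1 + S)).submatrix (fun i : J => (i : Fin n)) (fun j : J => (j : Fin n))).det
      = (1 + S * Matrix.diagonal (fun j => if j ∈ J then (1 : ℝ) else -1)).det := by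
  classical
  have hdet : IsUnit (1 - S).det := (Matrix.isUnit_iff_isUnit_det _).mp hinv
  set M : Matrix (Fin n) (Fin n) ℝ := (1 - S)⁻¹ * (1 + S) with hM
  set N : Matrix (Fin n) (Fin n) ℝ :=
    Matrix.of (fun i j => if j ∈ J then M i j else if i = j then (1:ℝ) else 0) with hN
  have hmulM : (1 - S) * M = 1 + S := by
    rw [hM, ← Matrix.mul_assoc, Matrix.mul_nonsing_inv _ hdet, Matrix.one_mul]
  have hN1 : ∀ i j, j ∉ J → N i j = (1 : Matrix (Fin n) (Fin n) ℝ) i j := by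
    intro i j hj
    simp [hN, hj, Matrix.one_apply]
  have h1 : (1 - S) * N = 1 + S * Matrix.diagonal (fun j => if j ∈ J then (1 : ℝ) else -1) := by
    ext i j
    by_cases hj : j ∈ J
    · have : ((1 - S) * N) i j = ((1 - S) * M) i j := by
        simp only [Matrix.mul_apply, hN, Matrix.of_apply, hj, if_true]
      rw [this, hmulM]
      simp [Matrix.mul_diagonal, hj, Matrix.add_apply]
    · have : ((1 - S) * N) i j = ((1 - S) * (1 : Matrix (Fin n) (Fin n) ℝ)) i j := by
        simp only [Matrix.mul_apply]
        exact Finset.sum_congr rfl (fun k _ => by rw [hN1 k j hj])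
      rw [this, Matrix.mul_one]
      simp [Matrix.mul_diagonal, hj, Matrix.add_apply, Matrix.sub_apply, sub_eq_add_neg]
  have h2 : N.det = (M.submatrix (fun i : J => (i : Fin n)) (fun j : J => (j : Fin n))).det := by
    rw [← Matrix.det_submatrix_equiv_self (Equiv.sumCompl (· ∈ J)) N]
    have hblock : N.submatrix (Equiv.sumCompl (· ∈ J)) (Equiv.sumCompl (· ∈ J)) =
        Matrix.fromBlocks (M.submatrix (fun i : J => (i : Fin n)) (fun j : J => (j : Fin n)))
          0 (Matrix.of fun (i : {a : Fin n // ¬ a ∈ J}) (j : J) => M i j) 1 := by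
      ext i j
      cases i with
      | inl i =>
        cases j with
        | inl j =>
          simp [hN, Equiv.sumCompl_apply_inl, j.2]
        | inr j =>
          have hne : (i : Fin n) ≠ (j : Fin n) := fun h => j.2 (h ▸ i.2)
          simp [hN, Equiv.sumCompl_apply_inl, Equiv.sumCompl_apply_inr, j.2, hne]
      | inr i =>
        cases j with
        | inl j =>
          simp [hN, Equiv.sumCompl_apply_inl, Equiv.sumCompl_apply_inr, j.2]
        | inr j =>
          have hcoe : ((i : Fin n) = (j : Fin n)) ↔ i = j := Subtype.coe_inj
          simp [hN, Equiv.sumCompl_apply_inr, j.2, Matrix.one_apply, hcoe]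
    rw [hblock, Matrix.det_fromBlocks_zero₁₂, Matrix.det_one, mul_one]
  calc (1 - S).det * (M.submatrix _ _).det = (1 - S).det * N.det := by rw [h2]
    _ = ((1 - S) * N).det := (Matrix.det_mul _ _).symm
    _ = _ := by rw [h1]




/-- The key "cube" condition. -/
lemma det_affine (S : Matrix (Fin n) (Fin n) ℝ) (d : Fin n → ℝ) (a : Fin n) :
    ∃ c0 c1 : ℝ, ∀ t : ℝ,
      (1 + S * Matrix.diagonal (Function.update d a t)).det = c0 + t * c1 := by
  classical
  set B : Matrix (Fin n) (Fin n) ℝ := 1 + S * Matrix.diagonal d with hB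
  set u : Fin n → ℝ := fun i => (1 : Matrix (Fin n) (Fin n) ℝ) i a with hu
  set v : Fin n → ℝ := fun i => S i a with hv
  refine ⟨(B.updateCol a u).det, (B.updateCol a v).det, fun t => ?_⟩
  have hmat : 1 + S * Matrix.diagonal (Function.update d a t)
      = B.updateCol a (u + t • v) := by
    ext i j
    by_cases hj : j = a
    · subst hj
      simp [Matrix.updateCol_apply, Matrix.add_apply, Matrix.mul_diagonal, hu, hv,
        Function.update_self, mul_comm]
    · simp [Matrix.updateCol_apply, hj, hB, Matrix.add_apply, Matrix.mul_diagonal,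
        Function.update_of_ne hj]
  rw [hmat, Matrix.det_updateCol_add, Matrix.det_updateCol_smul]

lemma cube_pos_of_corners (S : Matrix (Fin n) (Fin n) ℝ)
    (hcorner : ∀ s : Fin n → ℝ, (∀ i, s i = 1 ∨ s i = -1) →
      0 < (1 + S * Matrix.diagonal s).det * (1 - S).det) :
    ∀ d : Fin n → ℝ, (∀ i, |d i| ≤ 1) →
      0 < (1 + S * Matrix.diagonal d).det * (1 - S).det := by
  classical
  suffices H : ∀ T : Finset (Fin n), ∀ d : Fin n → ℝ, (∀ i, |d i| ≤ 1) →
      (∀ i ∉ T, d i = 1 ∨ d i = -1) →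
      0 < (1 + S * Matrix.diagonal d).det * (1 - S).det by
    intro d hd
    exact H Finset.univ d hd (fun i hi => absurd (Finset.mem_univ i) hi)
  intro T
  induction T using Finset.induction_on with
  | empty => exact fun d hd hc => hcorner d (fun i => hc i (by simp))
  | @insert a T ha IH =>
    intro d hd hc
    obtain ⟨c0, c1, haff⟩ := det_affine S d a
    have hplus : 0 < (c0 + 1 * c1) * (1 - S).det := by
      rw [← haff 1]
      refine IH (Function.update d a 1) ?_ ?_
      · intro i
        by_cases hi : i = a
        · subst hi; simp
        · simpa [Function.update_of_ne hi] using hd i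
      · intro i hi
        by_cases hia : i = a
        · subst hia; simp
        · rw [Function.update_of_ne hia]
          exact hc i (by simp [hia, hi])
    have hminus : 0 < (c0 + (-1) * c1) * (1 - S).det := by
      rw [← haff (-1)]
      refine IH (Function.update d a (-1)) ?_ ?_
      · intro i
        by_cases hi : i = a
        · subst hi; simp
        · simpa [Function.update_of_ne hi] using hd i
      · intro i hi
        by_cases hia : i = a
        · subst hia; simp
        · rw [Function.update_of_ne hia]
          exact hc i (by simp [hia, hi])
    have hda : |d a| ≤ 1 := hd a
    have h1 : d a ≤ 1 := (abs_le.mp hda).2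
    have h2 : -1 ≤ d a := (abs_le.mp hda).1
    have : 0 < (c0 + d a * c1) * (1 - S).det := by
      rcases le_or_gt 0 (d a) with h | h
      · nlinarith [mul_nonneg h hplus.le, mul_nonneg (by linarith : (0:ℝ) ≤ 1 - d a) hminus.le]
      · nlinarith [mul_nonneg (by linarith : (0:ℝ) ≤ -(d a)) hminus.le,
          mul_nonneg (by linarith : (0:ℝ) ≤ 1 + d a) hplus.le]
    calc (0:ℝ) < (c0 + d a * c1) * (1 - S).det := this
      _ = _ := by rw [← haff (d a), Function.update_eq_self]




/-- From a componentwise domination `|y i| ≤ |(T *ᵥ y) i|` and non-vanishing dets, `y = 0`. -/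
lemma eq_zero_of_dominated (T : Matrix (Fin n) (Fin n) ℝ)
    (hc : ∀ d : Fin n → ℝ, (∀ i, |d i| ≤ 1) →
      ((1 : Matrix (Fin n) (Fin n) ℝ) + Matrix.diagonal d * T).det ≠ 0)
    (y : Fin n → ℝ) (hy : ∀ i, |y i| ≤ |T.mulVec y i|) : y = 0 := by
  classical
  by_contra hy0
  set d : Fin n → ℝ := fun i => if T.mulVec y i = 0 then 0 else -(y i / T.mulVec y i) with hd
  have hd1 : ∀ i, |d i| ≤ 1 := by
    intro i
    by_cases h : T.mulVec y i = 0
    · simp [hd, h]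
    · have hpos : 0 < |T.mulVec y i| := abs_pos.mpr h
      simp only [hd, h, if_false, abs_neg, abs_div]
      rw [div_le_one hpos]
      exact hy i
  have hker : ((1 : Matrix (Fin n) (Fin n) ℝ) + Matrix.diagonal d * T).mulVec y = 0 := by
    funext i
    have e1 : ((1 : Matrix (Fin n) (Fin n) ℝ) + Matrix.diagonal d * T).mulVec y i
        = y i + ((Matrix.diagonal d * T).mulVec y) i := by
      rw [Matrix.add_mulVec, Matrix.one_mulVec]; rfl
    have e2 : ((Matrix.diagonal d * T).mulVec y) i = d i * T.mulVec y i := by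
      rw [← Matrix.mulVec_mulVec]; simp [Matrix.mulVec_diagonal]
    rw [e1, e2]
    show y i + d i * T.mulVec y i = (0 : Fin n → ℝ) i
    by_cases h : T.mulVec y i = 0
    · have : |y i| ≤ 0 := by simpa [h] using hy i
      have : y i = 0 := abs_nonpos_iff.mp this
      simp [this, h, hd]
    · simp only [hd, h, if_false, Pi.zero_apply]
      field_simp
      ring
  have : ∃ v ≠ 0, ((1 : Matrix (Fin n) (Fin n) ℝ) + Matrix.diagonal d * T).mulVec v = 0 :=
    ⟨y, hy0, hker⟩
  exact hc d hd1 ((Matrix.exists_mulVec_eq_zero_iff).mp this)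

lemma hc_of_Hcube {S : Matrix (Fin n) (Fin n) ℝ} (h : Hcube S) :
    ∀ d : Fin n → ℝ, (∀ i, |d i| ≤ 1) →
      ((1 : Matrix (Fin n) (Fin n) ℝ) + Matrix.diagonal d * S).det ≠ 0 := by
  intro d hd
  rw [Matrix.det_one_add_mul_comm]
  exact h d hd

lemma hc_of_Hcube_transpose {S : Matrix (Fin n) (Fin n) ℝ} (h : Hcube S) :
    ∀ d : Fin n → ℝ, (∀ i, |d i| ≤ 1) →
      ((1 : Matrix (Fin n) (Fin n) ℝ) + Matrix.diagonal d * Sᵀ).det ≠ 0 := by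
  intro d hd
  have : ((1 : Matrix (Fin n) (Fin n) ℝ) + Matrix.diagonal d * Sᵀ)ᵀ
      = 1 + S * Matrix.diagonal d := by
    rw [Matrix.transpose_add, Matrix.transpose_one, Matrix.transpose_mul,
      Matrix.transpose_transpose, Matrix.diagonal_transpose]
  rw [← Matrix.det_transpose, this]
  exact h d hd

/-- Sign non-reversal, generic form. -/
lemma snr_generic (T : Matrix (Fin n) (Fin n) ℝ) (hinv : IsUnit (1 - T))
    (hc : ∀ d : Fin n → ℝ, (∀ i, |d i| ≤ 1) →
      ((1 : Matrix (Fin n) (Fin n) ℝ) + Matrix.diagonal d * T).det ≠ 0)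
    (x : Fin n → ℝ) (hx : ∀ i, x i * ((1 - T)⁻¹ * (1 + T)).mulVec x i ≤ 0) : x = 0 := by
  have hdet : IsUnit (1 - T).det := (Matrix.isUnit_iff_isUnit_det _).mp hinv
  set y : Fin n → ℝ := (1 - T)⁻¹.mulVec x with hy
  have hxy : x = (1 - T).mulVec y := by
    rw [hy, Matrix.mulVec_mulVec, Matrix.mul_nonsing_inv _ hdet, Matrix.one_mulVec]
  have hMx : ((1 - T)⁻¹ * (1 + T)).mulVec x = (1 + T).mulVec y := by
    rw [hxy, Matrix.mulVec_mulVec, Matrix.mul_assoc]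
    have hcomm : (1 + T) * (1 - T) = (1 - T) * (1 + T) := by noncomm_ring
    rw [hcomm, ← Matrix.mul_assoc, Matrix.nonsing_inv_mul _ hdet, Matrix.one_mul]
  have hdom : ∀ i, |y i| ≤ |T.mulVec y i| := by
    intro i
    have h1 : x i = y i - T.mulVec y i := by
      rw [hxy, Matrix.sub_mulVec, Matrix.one_mulVec]; rfl
    have h2 : ((1 - T)⁻¹ * (1 + T)).mulVec x i = y i + T.mulVec y i := by
      rw [hMx, Matrix.add_mulVec, Matrix.one_mulVec]; rfl
    have := hx i
    rw [h1, h2] at this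
    nlinarith [abs_nonneg (y i), abs_nonneg (T.mulVec y i), sq_abs (y i),
      sq_abs (T.mulVec y i), this]
  have hy0 : y = 0 := eq_zero_of_dominated T hc y hdom
  rw [hxy, hy0, Matrix.mulVec_zero]



/-- Uniqueness of solutions to the AVE under the cube condition. -/
lemma uniq_of_Hcube {S : Matrix (Fin n) (Fin n) ℝ} (h : Hcube S) {z z' : Fin n → ℝ}
    (hzz : z + S.mulVec (fun i => |z i|) = z' + S.mulVec (fun i => |z' i|)) : z = z' := by
  classical
  set y : Fin n → ℝ := z - z' with hy
  set d : Fin n → ℝ := fun i => if z i = z' i then 0 else (|z i| - |z' i|) / (z i - z' i) with hd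
  have hd1 : ∀ i, |d i| ≤ 1 := by
    intro i
    by_cases hi : z i = z' i
    · simp [hd, hi]
    · have hne : z i - z' i ≠ 0 := sub_ne_zero.mpr hi
      simp only [hd, hi, if_false, abs_div]
      rw [div_le_one (abs_pos.mpr hne)]
      exact abs_abs_sub_abs_le_abs_sub _ _
  have habs : ∀ i, |z i| - |z' i| = d i * y i := by
    intro i
    by_cases hi : z i = z' i
    · simp [hd, hi]
    · have hne : z i - z' i ≠ 0 := sub_ne_zero.mpr hi
      simp only [hd, hi, if_false, hy, Pi.sub_apply]
      field_simp
  have hker : ((1 : Matrix (Fin n) (Fin n) ℝ) + S * Matrix.diagonal d).mulVec y = 0 := by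
    funext i
    have e1 : ((1 : Matrix (Fin n) (Fin n) ℝ) + S * Matrix.diagonal d).mulVec y i
        = y i + (S.mulVec (fun j => d j * y j)) i := by
      rw [Matrix.add_mulVec, Matrix.one_mulVec, ← Matrix.mulVec_mulVec]
      have ediag : Matrix.diagonal d *ᵥ y = fun j => d j * y j := by
        funext j; simp [Matrix.mulVec_diagonal]
      rw [ediag]
      rfl
    rw [e1]
    have e2 : (fun j => d j * y j) = (fun j => |z j|) - (fun j => |z' j|) := by
      funext j; rw [← habs j]; rfl
    rw [e2, Matrix.mulVec_sub]
    have := congrFun hzz i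
    simp only [Pi.add_apply, Pi.sub_apply, hy, Pi.zero_apply] at this ⊢
    linarith
  by_contra hne
  have hy0 : y ≠ 0 := fun h0 => hne (sub_eq_zero.mp (by rw [← hy]; exact h0))
  exact h d hd1 (Matrix.exists_mulVec_eq_zero_iff.mp ⟨y, hy0, hker⟩)

/-- Failure of the cube condition gives two distinct solutions with the same data. -/
lemma Hcube_of_uniq {S : Matrix (Fin n) (Fin n) ℝ}
    (h : ∀ c : Fin n → ℝ, ∃! z : Fin n → ℝ, z + S.mulVec (fun i => |z i|) = c) : Hcube S := by
  classical
  intro d hd hdet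
  obtain ⟨y, hy0, hker⟩ := Matrix.exists_mulVec_eq_zero_iff.mpr hdet
  set u : Fin n → ℝ := fun i => d i * y i with hu
  have hyu : y + S.mulVec u = 0 := by
    have e1 : ((1 : Matrix (Fin n) (Fin n) ℝ) + S * Matrix.diagonal d).mulVec y
        = y + S.mulVec u := by
      rw [Matrix.add_mulVec, Matrix.one_mulVec, ← Matrix.mulVec_mulVec]
      have ediag : Matrix.diagonal d *ᵥ y = u := by
        funext j; simp [Matrix.mulVec_diagonal, hu]
      rw [ediag]
    rw [← e1, hker]
  have huy : ∀ i, |u i| ≤ |y i| := by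
    intro i
    rw [hu]
    calc |d i * y i| = |d i| * |y i| := abs_mul _ _
      _ ≤ 1 * |y i| := mul_le_mul_of_nonneg_right (hd i) (abs_nonneg _)
      _ = |y i| := one_mul _
  set z : Fin n → ℝ := fun i => if 0 ≤ y i then (y i + u i) / 2 else (y i - u i) / 2 with hz
  set z' : Fin n → ℝ := fun i => if 0 ≤ y i then (u i - y i) / 2 else -(y i + u i) / 2 with hz'
  have hsub : z - z' = y := by
    funext i
    by_cases hi : 0 ≤ y i <;> simp only [hz, hz', Pi.sub_apply, hi, if_true, if_false] <;> ring
  have habs : ∀ i, |z i| - |z' i| = u i := by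
    intro i
    obtain ⟨hul, hur⟩ := abs_le.mp (huy i)
    by_cases hi : 0 ≤ y i
    · have hy' : |y i| = y i := abs_of_nonneg hi
      have h1 : |z i| = (y i + u i) / 2 := by
        simp only [hz, hi, if_true]
        exact abs_of_nonneg (by linarith [hul, hy'])
      have h2 : |z' i| = (y i - u i) / 2 := by
        simp only [hz', hi, if_true]
        rw [abs_of_nonpos (by linarith [hur, hy'])]
        ring
      rw [h1, h2]; ring
    · push_neg at hi
      have hy' : |y i| = -y i := abs_of_neg hi
      have h1 : |z i| = (u i - y i) / 2 := by
        simp only [hz, hi.not_ge, if_false]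
        rw [abs_of_nonpos (by linarith [hul, hy'])]
        ring
      have h2 : |z' i| = -(y i + u i) / 2 := by
        simp only [hz', hi.not_ge, if_false]
        exact abs_of_nonneg (by linarith [hur, hy'])
      rw [h1, h2]; ring
  have hceq : z + S.mulVec (fun i => |z i|) = z' + S.mulVec (fun i => |z' i|) := by
    have e : (fun i => |z i|) = (fun i => |z' i|) + u := by
      funext i
      have := habs i
      simp only [Pi.add_apply]
      linarith
    have hz2 : z = z' + y := by rw [← hsub]; abel
    rw [e, Matrix.mulVec_add, hz2]
    calc z' + y + (S.mulVec (fun i => |z' i|) + S.mulVec u)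
        = z' + S.mulVec (fun i => |z' i|) + (y + S.mulVec u) := by abel
      _ = z' + S.mulVec (fun i => |z' i|) := by rw [hyu, add_zero]
  obtain ⟨w, _, hwu⟩ := h (z' + S.mulVec (fun i => |z' i|))
  have h1 := hwu z hceq
  have h2 := hwu z' rfl
  apply hy0
  rw [← hsub, h1, h2, sub_self]

/-- Sign constancy over the cube, given non-vanishing plus invertibility of `1 - S`. -/
lemma cube_pos_of_Hcube {S : Matrix (Fin n) (Fin n) ℝ} (hinv : IsUnit (1 - S)) (h : Hcube S) :
    ∀ d : Fin n → ℝ, (∀ i, |d i| ≤ 1) →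
      0 < (1 + S * Matrix.diagonal d).det * (1 - S).det := by
  intro d hd
  have hdet0 : (1 - S).det ≠ 0 := by
    have := (Matrix.isUnit_iff_isUnit_det _).mp hinv
    exact this.ne_zero
  set g : ℝ → ℝ := fun θ =>
    (1 + S * Matrix.diagonal (fun i => (1 - θ) * (-1) + θ * d i)).det * (1 - S).det with hg
  have hcont : Continuous g := by
    apply Continuous.mul _ continuous_const
    apply Continuous.matrix_det
    apply Continuous.add continuous_const
    apply Continuous.matrix_mul continuous_const
    apply Continuous.matrix_diagonal
    exact continuous_pi fun i => by continuity
  have hdiagneg : Matrix.diagonal (fun _ : Fin n => (-1 : ℝ))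
      = (-1 : Matrix (Fin n) (Fin n) ℝ) := by
    ext i j
    by_cases hij : i = j <;> simp [Matrix.diagonal_apply, Matrix.one_apply, hij]
  have hg0 : g 0 = (1 - S).det * (1 - S).det := by
    have hfun : (fun i : Fin n => (1 - (0:ℝ)) * (-1) + 0 * d i) = fun _ : Fin n => (-1:ℝ) := by
      funext i; ring
    have hmat : (1 + S * Matrix.diagonal fun i : Fin n => (1 - (0:ℝ)) * (-1) + 0 * d i)
        = 1 - S := by
      rw [hfun, hdiagneg, Matrix.mul_neg, Matrix.mul_one, ← sub_eq_add_neg]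
    simp only [hg]
    rw [hmat]
  have hgne : ∀ θ : ℝ, θ ∈ Set.Icc (0:ℝ) 1 → g θ ≠ 0 := by
    intro θ hθ
    obtain ⟨h0, h1⟩ := hθ
    have hcube : ∀ i, |(1 - θ) * (-1) + θ * d i| ≤ 1 := by
      intro i
      have := hd i
      have habs := abs_le.mp this
      rw [abs_le]
      constructor <;> nlinarith [habs.1, habs.2]
    exact mul_ne_zero (h _ hcube) hdet0
  have hg0pos : 0 < g 0 := by
    rw [hg0]
    exact mul_self_pos.mpr hdet0
  have hg1 : 0 < g 1 := by
    by_contra hle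
    push_neg at hle
    have hne := hgne 1 (by norm_num)
    have hlt : g 1 < 0 := lt_of_le_of_ne hle hne
    have : (0:ℝ) ∈ Set.Icc (g 1) (g 0) := ⟨hlt.le, hg0pos.le⟩
    obtain ⟨θ, hθ, hgθ⟩ := intermediate_value_Icc' (by norm_num : (0:ℝ) ≤ 1)
      (hcont.continuousOn) this
    exact hgne θ hθ hgθ
  calc (0:ℝ) < g 1 := hg1
    _ = _ := by
      simp only [hg]
      congr 2
      funext i
      ring




noncomputable def phi (a b : ℝ) : ℝ := Real.sqrt (a^2 + b^2) - a - b

lemma phi_comm (a b : ℝ) : phi a b = phi b a := by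
  unfold phi
  rw [add_comm (a^2)]
  ring

lemma phi_eq_zero_iff {a b : ℝ} : phi a b = 0 ↔ 0 ≤ a ∧ 0 ≤ b ∧ a * b = 0 := by
  unfold phi
  constructor
  · intro h
    have hs : Real.sqrt (a^2 + b^2) = a + b := by linarith
    have hab : 0 ≤ a + b := hs ▸ Real.sqrt_nonneg _
    have hsq : a^2 + b^2 = (a + b)^2 := by
      have := Real.sq_sqrt (by positivity : (0:ℝ) ≤ a^2 + b^2)
      rw [hs] at this
      linarith
    have hmul : a * b = 0 := by nlinarith
    rcases mul_eq_zero.mp hmul with h0 | h0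
    · exact ⟨le_of_eq h0.symm, by nlinarith, hmul⟩
    · exact ⟨by nlinarith, le_of_eq h0.symm, hmul⟩
  · rintro ⟨ha, hb, hab⟩
    rcases mul_eq_zero.mp hab with h0 | h0
    · subst h0
      rw [show (0:ℝ)^2 + b^2 = b^2 by ring, Real.sqrt_sq hb]
      ring
    · subst h0
      rw [show a^2 + (0:ℝ)^2 = a^2 by ring, Real.sqrt_sq ha]
      ring

lemma phi_le_cases {a b : ℝ} (hab : a ≤ b) : |min a b| ≤ 2 * |phi a b| := by
  have hmin : min a b = a := min_eq_left hab
  have hrb : |b| ≤ Real.sqrt (a^2 + b^2) := by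
    rw [← Real.sqrt_sq_eq_abs]
    exact Real.sqrt_le_sqrt (by nlinarith)
  rcases le_or_gt a 0 with ha | ha
  · have hphi : -a ≤ phi a b := by
      have hb := le_abs_self b
      unfold phi
      linarith
    rw [hmin, abs_of_nonpos ha]
    have h1 : phi a b ≤ |phi a b| := le_abs_self _
    have h2 : 0 ≤ |phi a b| := abs_nonneg _
    linarith
  · have hb : 0 < b := lt_of_lt_of_le ha hab
    have hr1 : Real.sqrt (a^2 + b^2) ≤ a + b := by
      rw [show a + b = Real.sqrt ((a+b)^2) from (Real.sqrt_sq (by linarith)).symm]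
      exact Real.sqrt_le_sqrt (by nlinarith)
    have hr2 : Real.sqrt (a^2 + b^2) ≤ (a + 2*b)/2 := by
      rw [show (a + 2*b)/2 = Real.sqrt (((a+2*b)/2)^2) from (Real.sqrt_sq (by linarith)).symm]
      exact Real.sqrt_le_sqrt (by nlinarith)
    have hphi : phi a b ≤ 0 := by unfold phi; linarith
    rw [hmin, abs_of_pos ha, abs_of_nonpos hphi]
    unfold phi at *
    linarith

lemma abs_min_le_two_abs_phi (a b : ℝ) : |min a b| ≤ 2 * |phi a b| := by
  rcases le_total a b with h | h
  · exact phi_le_cases h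
  · rw [min_comm, phi_comm]
    exact phi_le_cases h

lemma abs_min_sub_min_le (a b c : ℝ) : |min a b - min a c| ≤ |b - c| := by
  simp only [min_def]
  split_ifs <;>
    (rw [abs_le]; constructor <;> linarith [le_abs_self (b - c), neg_abs_le (b - c)])

noncomputable def psi (p : ℝ × ℝ) : ℝ := (phi p.1 p.2)^2

noncomputable def ga (p : ℝ × ℝ) : ℝ := p.1 / Real.sqrt (p.1^2 + p.2^2) - 1
noncomputable def gb (p : ℝ × ℝ) : ℝ := p.2 / Real.sqrt (p.1^2 + p.2^2) - 1

noncomputable def Dpsi (p : ℝ × ℝ) : ℝ × ℝ →L[ℝ] ℝ :=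
  (2 * phi p.1 p.2) • (ga p • ContinuousLinearMap.fst ℝ ℝ ℝ + gb p • ContinuousLinearMap.snd ℝ ℝ ℝ)

lemma ga_nonpos {p : ℝ × ℝ} : ga p ≤ 0 := by
  unfold ga
  rcases eq_or_ne (Real.sqrt (p.1^2 + p.2^2)) 0 with h | h
  · simp [h]
  · have hpos : 0 < Real.sqrt (p.1^2 + p.2^2) :=
      lt_of_le_of_ne (Real.sqrt_nonneg _) (Ne.symm h)
    have h1 : p.1 ≤ Real.sqrt (p.1^2 + p.2^2) := by
      calc p.1 ≤ |p.1| := le_abs_self _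
        _ ≤ _ := by rw [← Real.sqrt_sq_eq_abs]; exact Real.sqrt_le_sqrt (by nlinarith)
    have := div_le_one_of_le₀ h1 hpos.le
    linarith

lemma gb_nonpos {p : ℝ × ℝ} : gb p ≤ 0 := by
  unfold gb
  rcases eq_or_ne (Real.sqrt (p.1^2 + p.2^2)) 0 with h | h
  · simp [h]
  · have hpos : 0 < Real.sqrt (p.1^2 + p.2^2) :=
      lt_of_le_of_ne (Real.sqrt_nonneg _) (Ne.symm h)
    have h1 : p.2 ≤ Real.sqrt (p.1^2 + p.2^2) := by
      calc p.2 ≤ |p.2| := le_abs_self _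
        _ ≤ _ := by rw [← Real.sqrt_sq_eq_abs]; exact Real.sqrt_le_sqrt (by nlinarith)
    have := div_le_one_of_le₀ h1 hpos.le
    linarith

/-- If `phi p.1 p.2 ≠ 0` then `gb p < 0`. -/
lemma gb_neg_of_phi_ne {p : ℝ × ℝ} (h : phi p.1 p.2 ≠ 0) : gb p < 0 := by
  rcases lt_or_eq_of_le (gb_nonpos (p := p)) with hlt | heq
  · exact hlt
  · exfalso
    unfold gb at heq
    rcases eq_or_ne (Real.sqrt (p.1^2 + p.2^2)) 0 with h0 | h0
    · rw [h0] at heq; simp at heq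
    · have hpos : 0 < Real.sqrt (p.1^2 + p.2^2) :=
        lt_of_le_of_ne (Real.sqrt_nonneg _) (Ne.symm h0)
      have h2 : p.2 = Real.sqrt (p.1^2 + p.2^2) := by
        field_simp at heq
        linarith
      have hsq : p.1^2 + p.2^2 = p.2^2 := by
        have := Real.sq_sqrt (by positivity : (0:ℝ) ≤ p.1^2 + p.2^2)
        rw [← h2] at this
        linarith
      have h1 : p.1 = 0 := by nlinarith
      apply h
      unfold phi
      rw [h1] at h2 ⊢
      linarith

lemma ga_neg_of_phi_ne {p : ℝ × ℝ} (h : phi p.1 p.2 ≠ 0) : ga p < 0 := by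
  have h' : phi p.2 p.1 ≠ 0 := by rw [phi_comm]; exact h
  have := gb_neg_of_phi_ne (p := (p.2, p.1)) (by simpa using h')
  unfold gb at this
  unfold ga
  rw [add_comm (p.1^2)]
  simpa using this

set_option maxHeartbeats 1000000 in
lemma hasFDerivAt_psi (p : ℝ × ℝ) : HasFDerivAt psi (Dpsi p) p := by
  by_cases hp : p = 0
  · subst hp
    have hphi0 : phi (0:ℝ×ℝ).1 (0:ℝ×ℝ).2 = 0 := by
      unfold phi; norm_num
    have hD : Dpsi (0 : ℝ × ℝ) = 0 := by
      unfold Dpsi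
      rw [hphi0]
      simp
    rw [hD, hasFDerivAt_iff_isLittleO_nhds_zero]
    rw [Asymptotics.isLittleO_iff]
    intro c hc
    rw [Metric.eventually_nhds_iff]
    refine ⟨c / 16, by positivity, fun h hdist => ?_⟩
    have hb1 : |h.1| ≤ ‖h‖ := by rw [← Real.norm_eq_abs]; exact norm_fst_le h
    have hb2 : |h.2| ≤ ‖h‖ := by rw [← Real.norm_eq_abs]; exact norm_snd_le h
    have hs : Real.sqrt (h.1^2 + h.2^2) ≤ |h.1| + |h.2| := by
      rw [show |h.1| + |h.2| = Real.sqrt ((|h.1| + |h.2|)^2) from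
        (Real.sqrt_sq (by positivity)).symm]
      apply Real.sqrt_le_sqrt
      have := abs_nonneg h.1
      have := abs_nonneg h.2
      nlinarith [sq_abs h.1, sq_abs h.2, mul_nonneg (abs_nonneg h.1) (abs_nonneg h.2)]
    have hphi : |phi h.1 h.2| ≤ 4 * ‖h‖ := by
      unfold phi
      have h1 : Real.sqrt (h.1^2+h.2^2) - h.1 - h.2 ≤ 4 * ‖h‖ := by
        have := neg_abs_le h.1
        have := neg_abs_le h.2
        linarith
      have h2 : -(4 * ‖h‖) ≤ Real.sqrt (h.1^2+h.2^2) - h.1 - h.2 := by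
        have := Real.sqrt_nonneg (h.1^2 + h.2^2)
        have := le_abs_self h.1
        have := le_abs_self h.2
        linarith
      rw [abs_le]; exact ⟨h2, h1⟩
    have hnorm : ‖h - 0‖ < c / 16 := by simpa using hdist
    have hn : ‖h‖ ≤ c / 16 := by
      simpa using hnorm.le
    have hpsi : |psi (0 + h) - psi 0 - 0| ≤ 16 * ‖h‖ * ‖h‖ := by
      have : psi (0 + h) = (phi h.1 h.2)^2 := by
        unfold psi; norm_num
      rw [this]
      have hpsi0 : psi (0:ℝ×ℝ) = 0 := by unfold psi; rw [hphi0]; ring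
      rw [hpsi0]
      rw [sub_zero, sub_zero, abs_of_nonneg (sq_nonneg _)]
      calc (phi h.1 h.2)^2 = |phi h.1 h.2| * |phi h.1 h.2| := by
            rw [← abs_mul, abs_of_nonneg (mul_self_nonneg _)]; ring
        _ ≤ (4*‖h‖) * (4*‖h‖) :=
            mul_le_mul hphi hphi (abs_nonneg _) (by positivity)
        _ = 16 * ‖h‖ * ‖h‖ := by ring
    calc ‖psi (0 + h) - psi 0 - 0‖ = |psi (0 + h) - psi 0 - 0| := rfl
      _ ≤ 16 * ‖h‖ * ‖h‖ := hpsi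
      _ ≤ 16 * (c/16) * ‖h‖ := by nlinarith [norm_nonneg h]
      _ = c * ‖h‖ := by ring
  · have hpos : 0 < p.1^2 + p.2^2 := by
      rcases Prod.mk.injEq .. ▸ hp with _
      have : p.1 ≠ 0 ∨ p.2 ≠ 0 := by
        by_contra hcon
        push_neg at hcon
        exact hp (Prod.ext hcon.1 hcon.2)
      rcases this with h | h <;> positivity
    have hr : 0 < Real.sqrt (p.1^2 + p.2^2) := Real.sqrt_pos.mpr hpos
    have h1 : HasFDerivAt (fun q : ℝ × ℝ => q.1^2 + q.2^2)
        ((2*p.1) • ContinuousLinearMap.fst ℝ ℝ ℝ + (2*p.2) • ContinuousLinearMap.snd ℝ ℝ ℝ) p := by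
      have hf : HasFDerivAt (fun q : ℝ × ℝ => q.1 * q.1)
          (p.1 • ContinuousLinearMap.fst ℝ ℝ ℝ + p.1 • ContinuousLinearMap.fst ℝ ℝ ℝ) p :=
        (hasFDerivAt_fst (p := p) (𝕜 := ℝ)).mul (hasFDerivAt_fst (p := p) (𝕜 := ℝ))
      have hg : HasFDerivAt (fun q : ℝ × ℝ => q.2 * q.2)
          (p.2 • ContinuousLinearMap.snd ℝ ℝ ℝ + p.2 • ContinuousLinearMap.snd ℝ ℝ ℝ) p :=
        (hasFDerivAt_snd (p := p) (𝕜 := ℝ)).mul (hasFDerivAt_snd (p := p) (𝕜 := ℝ))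
      have hsum := hf.add hg
      have hfun : (fun q : ℝ × ℝ => q.1 * q.1 + q.2 * q.2)
          = fun q : ℝ × ℝ => q.1^2 + q.2^2 := by
        funext q; ring
      rw [← hfun]
      refine hsum.congr_fderiv ?_
      apply ContinuousLinearMap.ext
      intro v
      simp only [ContinuousLinearMap.add_apply, ContinuousLinearMap.smul_apply,
        ContinuousLinearMap.coe_fst', ContinuousLinearMap.coe_snd', smul_eq_mul]
      ring
    have h2 : HasDerivAt Real.sqrt (1/(2*Real.sqrt (p.1^2+p.2^2))) (p.1^2+p.2^2) :=
      Real.hasDerivAt_sqrt hpos.ne'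
    have h3 := h2.comp_hasFDerivAt p h1
    have h4 : HasFDerivAt (fun q : ℝ × ℝ => phi q.1 q.2)
        ((1/(2*Real.sqrt (p.1^2+p.2^2))) •
            ((2*p.1) • ContinuousLinearMap.fst ℝ ℝ ℝ + (2*p.2) • ContinuousLinearMap.snd ℝ ℝ ℝ)
          - ContinuousLinearMap.fst ℝ ℝ ℝ - ContinuousLinearMap.snd ℝ ℝ ℝ) p :=
      (h3.sub (hasFDerivAt_fst (p := p) (𝕜 := ℝ))).sub (hasFDerivAt_snd (p := p) (𝕜 := ℝ))
    have h6 := h4.mul h4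
    have hfun2 : (fun q : ℝ × ℝ => phi q.1 q.2 * phi q.1 q.2) = psi := by
      funext q; unfold psi; ring
    rw [← hfun2]
    refine h6.congr_fderiv ?_
    apply ContinuousLinearMap.ext
    intro v
    simp only [Dpsi, ga, gb, ContinuousLinearMap.add_apply, ContinuousLinearMap.smul_apply,
      ContinuousLinearMap.coe_sub', Pi.sub_apply, ContinuousLinearMap.coe_fst',
      ContinuousLinearMap.coe_snd', smul_eq_mul]
    unfold phi
    field_simp
    ring



lemma inv_comm (A : Matrix (Fin n) (Fin n) ℝ) (h : IsUnit (1 - A)) :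
    (1 - A)⁻¹ * (1 + A) = (1 + A) * (1 - A)⁻¹ := by
  have hd := (Matrix.isUnit_iff_isUnit_det _).mp h
  have comm : (1 + A) * (1 - A) = (1 - A) * (1 + A) := by noncomm_ring
  calc (1 - A)⁻¹ * (1 + A)
      = (1 - A)⁻¹ * (1 + A) * ((1 - A) * (1 - A)⁻¹) := by
        rw [Matrix.mul_nonsing_inv _ hd, Matrix.mul_one]
    _ = (1 - A)⁻¹ * ((1 + A) * (1 - A)) * (1 - A)⁻¹ := by
        simp only [Matrix.mul_assoc]
    _ = (1 - A)⁻¹ * ((1 - A) * (1 + A)) * (1 - A)⁻¹ := by rw [comm]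
    _ = ((1 - A)⁻¹ * (1 - A)) * ((1 + A) * (1 - A)⁻¹) := by simp only [Matrix.mul_assoc]
    _ = (1 + A) * (1 - A)⁻¹ := by rw [Matrix.nonsing_inv_mul _ hd, Matrix.one_mul]

lemma min_mul_nonneg {t a b : ℝ} (ht : 0 ≤ t) : min (t * a) (t * b) = t * min a b := by
  rcases le_total a b with h | h
  · rw [min_eq_left h, min_eq_left (mul_le_mul_of_nonneg_left h ht)]
  · rw [min_eq_right h, min_eq_right (mul_le_mul_of_nonneg_left h ht)]

lemma continuous_psi : Continuous psi := by
  unfold psi phi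
  have h1 : Continuous fun p : ℝ × ℝ => Real.sqrt (p.1^2 + p.2^2) :=
    Real.continuous_sqrt.comp (by continuity)
  exact ((h1.sub continuous_fst).sub continuous_snd).pow 2

set_option maxHeartbeats 2000000 in
lemma exists_solution {S : Matrix (Fin n) (Fin n) ℝ} (hinv : IsUnit (1 - S)) (hcube : Hcube S)
    (c : Fin n → ℝ) : ∃ z : Fin n → ℝ, z + S.mulVec (fun i => |z i|) = c := by
  classical
  have hdet : IsUnit (1 - S).det := (Matrix.isUnit_iff_isUnit_det _).mp hinv
  set M : Matrix (Fin n) (Fin n) ℝ := (1 - S)⁻¹ * (1 + S) with hM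
  have htr : (1 - Sᵀ) = (1 - S)ᵀ := by rw [Matrix.transpose_sub, Matrix.transpose_one]
  have hdetT : IsUnit (1 - Sᵀ).det := by rw [htr, Matrix.det_transpose]; exact hdet
  have hinvT : IsUnit (1 - Sᵀ) := (Matrix.isUnit_iff_isUnit_det _).mpr hdetT
  have hMT : Mᵀ = (1 - Sᵀ)⁻¹ * (1 + Sᵀ) := by
    rw [hM, Matrix.transpose_mul, Matrix.transpose_nonsing_inv, ← htr,
      Matrix.transpose_add, Matrix.transpose_one]
    exact (inv_comm Sᵀ hinvT).symm
  have snrM : ∀ x : Fin n → ℝ, (∀ i, x i * M.mulVec x i ≤ 0) → x = 0 := fun x hx =>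
    snr_generic S hinv (hc_of_Hcube hcube) x hx
  have snrMT : ∀ w : Fin n → ℝ, (∀ i, w i * Mᵀ.mulVec w i ≤ 0) → w = 0 := by
    intro w hw
    apply snr_generic Sᵀ hinvT (hc_of_Hcube_transpose hcube) w
    intro i
    have := hw i
    rwa [hMT] at this
  set qv : Fin n → ℝ := -((1 - S)⁻¹.mulVec c) with hqv
  set F : (Fin n → ℝ) → (Fin n → ℝ) := fun x => M.mulVec x + qv with hF
  have hFdef : ∀ x i, F x i = M.mulVec x i + qv i := fun x i => rfl
  set Psi : (Fin n → ℝ) → ℝ := fun x => ∑ i, psi (x i, F x i) with hPsi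
  have hPsiNonneg : ∀ x, 0 ≤ Psi x := fun x =>
    Finset.sum_nonneg fun i _ => by unfold psi; positivity
  have hMcont : Continuous fun x : Fin n → ℝ => M.mulVec x := by
    have h := (LinearMap.toContinuousLinearMap (Matrix.mulVecLin M)).continuous
    have he : (fun x : Fin n → ℝ => M.mulVec x)
        = ⇑(LinearMap.toContinuousLinearMap (Matrix.mulVecLin M)) := by
      funext x
      rw [LinearMap.coe_toContinuousLinearMap']
      simp [Matrix.mulVecLin_apply]
    rw [he]
    exact h
  have hFcont : Continuous F := by
    rw [hF]; exact hMcont.add continuous_const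
  have hPsiCont : Continuous Psi := by
    rw [hPsi]
    apply continuous_finset_sum
    intro i _
    exact continuous_psi.comp ((continuous_apply i).prodMk ((continuous_apply i).comp hFcont))
  -- coercivity constant
  obtain ⟨α, hα0, hαle⟩ : ∃ α > 0, ∀ x : Fin n → ℝ,
      α * ‖x‖ ≤ ‖(fun i => min (x i) (M.mulVec x i) : Fin n → ℝ)‖ := by
    rcases isEmpty_or_nonempty (Fin n) with hemp | hne
    · refine ⟨1, one_pos, fun x => ?_⟩
      have hx : x = 0 := funext fun i => (hemp.false i).elim
      subst hx
      simp
    · set f : (Fin n → ℝ) → ℝ := fun x => ‖(fun i => min (x i) (M.mulVec x i) : Fin n → ℝ)‖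
        with hf
      have hfcont : Continuous f := by
        apply Continuous.norm
        apply continuous_pi
        intro i
        exact Continuous.min (continuous_apply i) ((continuous_apply i).comp hMcont)
      have hsne : (Metric.sphere (0 : Fin n → ℝ) 1).Nonempty := by
        refine ⟨fun _ => 1, ?_⟩
        rw [Metric.mem_sphere, dist_zero_right]
        simp
      obtain ⟨s, hs_mem, hs_min⟩ := (isCompact_sphere (0 : Fin n → ℝ) 1).exists_isMinOn hsne
        hfcont.continuousOn
      have hs_norm : ‖s‖ = 1 := by
        rw [Metric.mem_sphere, dist_zero_right] at hs_mem
        exact hs_mem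
      have hs_pos : 0 < f s := by
        rcases lt_or_eq_of_le (norm_nonneg ((fun i => min (s i) (M.mulVec s i) : Fin n → ℝ)))
          with h | h
        · exact h
        · exfalso
          have hzero : (fun i => min (s i) (M.mulVec s i) : Fin n → ℝ) = 0 :=
            norm_eq_zero.mp h.symm
          have hs0 : s = 0 := by
            apply snrM
            intro i
            have hmin : min (s i) (M.mulVec s i) = 0 := congrFun hzero i
            rcases min_eq_iff.mp hmin with ⟨h1, h2⟩ | ⟨h1, h2⟩
            · rw [h1]; simp
            · rw [h1]; simp
          rw [hs0] at hs_norm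
          simp at hs_norm
      refine ⟨f s, hs_pos, fun x => ?_⟩
      rcases eq_or_ne x 0 with rfl | hx0
      · simp
      · have hxn : 0 < ‖x‖ := norm_pos_iff.mpr hx0
        set u : Fin n → ℝ := ‖x‖⁻¹ • x with hu
        have hun : ‖u‖ = 1 := by
          rw [hu, norm_smul]
          simp [abs_of_pos (inv_pos.mpr hxn), inv_mul_cancel₀ hxn.ne']
        have humem : u ∈ Metric.sphere (0 : Fin n → ℝ) 1 := by
          rw [Metric.mem_sphere, dist_zero_right]; exact hun
        have hfu : f s ≤ f u := isMinOn_iff.mp hs_min u humem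
        have hx_eq : x = ‖x‖ • u := by
          rw [hu, smul_smul, mul_inv_cancel₀ hxn.ne', one_smul]
        have hxi : ∀ i, x i = ‖x‖ * u i := by
          intro i
          rw [hu, Pi.smul_apply, smul_eq_mul]
          field_simp
        have hMu : ∀ i, M.mulVec x i = ‖x‖ * M.mulVec u i := by
          intro i
          rw [hu, Matrix.mulVec_smul, Pi.smul_apply, smul_eq_mul]
          field_simp
        have hscale : (fun i => min (x i) (M.mulVec x i) : Fin n → ℝ)
            = ‖x‖ • (fun i => min (u i) (M.mulVec u i) : Fin n → ℝ) := by
          funext i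
          rw [Pi.smul_apply, smul_eq_mul, ← min_mul_nonneg (norm_nonneg x), ← hxi i, ← hMu i]
        have : ‖(fun i => min (x i) (M.mulVec x i) : Fin n → ℝ)‖ = ‖x‖ * f u := by
          rw [hscale, norm_smul, norm_norm]
        rw [this]
        calc f s * ‖x‖ ≤ f u * ‖x‖ := mul_le_mul_of_nonneg_right hfu (norm_nonneg x)
          _ = ‖x‖ * f u := mul_comm _ _
  -- chain inequality
  have hchain : ∀ y : Fin n → ℝ, α * ‖y‖ ≤ 2 * Real.sqrt (Psi y) + ‖qv‖ := by
    intro y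
    have h1 : α * ‖y‖ ≤ ‖(fun i => min (y i) (M.mulVec y i) : Fin n → ℝ)‖ := hαle y
    have hdiff : ‖(fun i => min (y i) (M.mulVec y i) : Fin n → ℝ)
        - (fun i => min (y i) (F y i) : Fin n → ℝ)‖ ≤ ‖qv‖ := by
      rw [pi_norm_le_iff_of_nonneg (norm_nonneg qv)]
      intro i
      rw [Pi.sub_apply, Real.norm_eq_abs, hFdef y i]
      calc |min (y i) (M.mulVec y i) - min (y i) (M.mulVec y i + qv i)|
          ≤ |M.mulVec y i - (M.mulVec y i + qv i)| := abs_min_sub_min_le _ _ _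
        _ = |qv i| := by rw [show M.mulVec y i - (M.mulVec y i + qv i) = -(qv i) by ring, abs_neg]
        _ ≤ ‖qv‖ := by rw [← Real.norm_eq_abs]; exact norm_le_pi_norm qv i
    have h3 : ‖(fun i => min (y i) (F y i) : Fin n → ℝ)‖ ≤ 2 * Real.sqrt (Psi y) := by
      rw [pi_norm_le_iff_of_nonneg (by positivity)]
      intro i
      rw [Real.norm_eq_abs]
      calc |min (y i) (F y i)| ≤ 2 * |phi (y i) (F y i)| := abs_min_le_two_abs_phi _ _
        _ ≤ 2 * Real.sqrt (Psi y) := by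
            have hterm : psi (y i, F y i) ≤ Psi y := by
              have hrw : Psi y = ∑ j, psi (y j, F y j) := rfl
              rw [hrw]
              exact Finset.single_le_sum (f := fun j => psi (y j, F y j))
                (fun j _ => by unfold psi; positivity) (Finset.mem_univ i)
            have habs : |phi (y i) (F y i)| = Real.sqrt (psi (y i, F y i)) := by
              unfold psi
              rw [Real.sqrt_sq_eq_abs]
            rw [habs]
            have := Real.sqrt_le_sqrt hterm
            linarith
    have h2 : ‖(fun i => min (y i) (M.mulVec y i) : Fin n → ℝ)‖
        ≤ ‖(fun i => min (y i) (F y i) : Fin n → ℝ)‖ + ‖qv‖ := by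
      have := norm_sub_norm_le ((fun i => min (y i) (M.mulVec y i) : Fin n → ℝ))
        ((fun i => min (y i) (F y i) : Fin n → ℝ))
      linarith
    linarith
  -- existence of a global minimizer
  set R : ℝ := (2 * Real.sqrt (Psi 0) + ‖qv‖ + 1) / α with hR
  have hR0 : 0 ≤ R := by
    apply div_nonneg _ hα0.le
    positivity
  obtain ⟨xs, hxs_mem, hxs_min⟩ := (isCompact_closedBall (0 : Fin n → ℝ) R).exists_isMinOn
    ⟨0, Metric.mem_closedBall_self hR0⟩ hPsiCont.continuousOn
  have hglob : ∀ y, Psi xs ≤ Psi y := by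
    intro y
    by_cases hy : y ∈ Metric.closedBall (0 : Fin n → ℝ) R
    · exact isMinOn_iff.mp hxs_min y hy
    · have hyR : R < ‖y‖ := by
        rw [Metric.mem_closedBall, dist_zero_right, not_le] at hy
        exact hy
      have h0 : Psi xs ≤ Psi 0 := isMinOn_iff.mp hxs_min 0 (Metric.mem_closedBall_self hR0)
      have hαR : α * R = 2 * Real.sqrt (Psi 0) + ‖qv‖ + 1 := by
        rw [hR]
        field_simp
      have hgt : α * R < α * ‖y‖ := mul_lt_mul_of_pos_left hyR hα0
      have hy2 : Real.sqrt (Psi 0) < Real.sqrt (Psi y) := by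
        have := hchain y
        linarith
      have hlt : Psi 0 < Psi y := by
        have h1 := Real.sq_sqrt (hPsiNonneg 0)
        have h2 := Real.sq_sqrt (hPsiNonneg y)
        nlinarith [Real.sqrt_nonneg (Psi 0), Real.sqrt_nonneg (Psi y)]
      linarith
  -- derivative at the minimizer
  set mv : (Fin n → ℝ) →L[ℝ] (Fin n → ℝ) :=
    LinearMap.toContinuousLinearMap (Matrix.mulVecLin M) with hmv
  have hmv_apply : ∀ x, mv x = M.mulVec x := by
    intro x
    rw [hmv]
    rw [show (LinearMap.toContinuousLinearMap (Matrix.mulVecLin M)) x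
      = (Matrix.mulVecLin M) x from rfl]
    simp [Matrix.mulVecLin_apply]
  set G : Fin n → ((Fin n → ℝ) →L[ℝ] (ℝ × ℝ)) := fun i =>
    (ContinuousLinearMap.proj i).prod ((ContinuousLinearMap.proj i).comp mv) with hG
  have hGderiv : ∀ (i : Fin n) (x : Fin n → ℝ),
      HasFDerivAt (fun x : Fin n → ℝ => (x i, F x i)) (G i) x := by
    intro i x
    have h1 : HasFDerivAt (fun x : Fin n → ℝ => x i)
        (ContinuousLinearMap.proj i : (Fin n → ℝ) →L[ℝ] ℝ) x := by
      exact (ContinuousLinearMap.proj (R := ℝ) (φ := fun _ : Fin n => ℝ) i).hasFDerivAt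
    have h2 : HasFDerivAt (fun x : Fin n → ℝ => F x i)
        ((ContinuousLinearMap.proj i).comp mv) x := by
      have hline := (((ContinuousLinearMap.proj i).comp mv).hasFDerivAt (x := x)).add_const (qv i)
      have he : (fun y : Fin n → ℝ => ((ContinuousLinearMap.proj i).comp mv) y + qv i)
          = fun y => F y i := by
        funext y
        rw [ContinuousLinearMap.comp_apply, ContinuousLinearMap.proj_apply, hmv_apply, hFdef]
      rwa [he] at hline
    exact h1.prodMk h2
  set L : (Fin n → ℝ) →L[ℝ] ℝ := ∑ i, (Dpsi (xs i, F xs i)).comp (G i) with hL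
  have hPsiDeriv : HasFDerivAt Psi L xs := by
    rw [hPsi, hL]
    exact HasFDerivAt.fun_sum (fun i _ => (hasFDerivAt_psi _).comp xs (hGderiv i xs))
  have hlocal : IsLocalMin Psi xs := Filter.Eventually.of_forall hglob
  have hL0 : L = 0 := hlocal.hasFDerivAt_eq_zero hPsiDeriv
  -- extract the stationarity equations
  set v : Fin n → ℝ := fun i => 2 * phi (xs i) (F xs i) * ga (xs i, F xs i) with hv
  set w : Fin n → ℝ := fun i => 2 * phi (xs i) (F xs i) * gb (xs i, F xs i) with hw
  have heq : ∀ j, v j + ∑ i, w i * M i j = 0 := by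
    intro j
    set ej : Fin n → ℝ := Pi.single j 1 with hej
    have happ : L ej = 0 := by rw [hL0]; rfl
    rw [hL, ContinuousLinearMap.sum_apply] at happ
    have hterm : ∀ i, ((Dpsi (xs i, F xs i)).comp (G i)) ej
        = v i * ej i + w i * M i j := by
      intro i
      rw [ContinuousLinearMap.comp_apply]
      have hGval : G i ej = (ej i, M i j) := by
        rw [hG]
        ext
        · rw [ContinuousLinearMap.prod_apply, ContinuousLinearMap.proj_apply]
        · rw [ContinuousLinearMap.prod_apply, ContinuousLinearMap.comp_apply,
            ContinuousLinearMap.proj_apply, hmv_apply]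
          simp [hej]
      rw [hGval]
      simp only [Dpsi, ContinuousLinearMap.smul_apply, ContinuousLinearMap.add_apply,
        ContinuousLinearMap.coe_fst', ContinuousLinearMap.coe_snd', smul_eq_mul, hv, hw]
      ring
    rw [Finset.sum_congr rfl (fun i _ => hterm i)] at happ
    rw [Finset.sum_add_distrib] at happ
    have hdelta : ∑ i, v i * ej i = v j := by
      have hrw : ∀ i, v i * ej i = if i = j then v i else 0 := by
        intro i
        rw [hej, Pi.single_apply]
        by_cases hij : i = j <;> simp [hij]
      rw [Finset.sum_congr rfl (fun i _ => hrw i), Finset.sum_ite_eq' Finset.univ j v]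
      simp
    rw [hdelta] at happ
    exact happ
  have hMTw : ∀ j, Mᵀ.mulVec w j = -(v j) := by
    intro j
    have h := heq j
    have hmw : Mᵀ.mulVec w j = ∑ i, w i * M i j := by
      simp [Matrix.mulVec, dotProduct, Matrix.transpose_apply, mul_comm]
    linarith
  have hvw : ∀ i, 0 ≤ v i * w i := by
    intro i
    rcases eq_or_ne (phi (xs i) (F xs i)) 0 with h0 | h0
    · simp [hv, hw, h0]
    · have hga := ga_neg_of_phi_ne (p := (xs i, F xs i)) h0
      have hgb := gb_neg_of_phi_ne (p := (xs i, F xs i)) h0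
      simp only [hv, hw]
      nlinarith [mul_pos_of_neg_of_neg hga hgb, mul_self_pos.mpr h0]
  have hw0 : w = 0 := by
    apply snrMT
    intro i
    rw [hMTw i]
    nlinarith [hvw i]
  have hphi0 : ∀ i, phi (xs i) (F xs i) = 0 := by
    intro i
    by_contra h0
    have hgb := gb_neg_of_phi_ne (p := (xs i, F xs i)) h0
    have hwi : w i = 0 := by rw [hw0]; rfl
    simp only [hw] at hwi
    rcases mul_eq_zero.mp hwi with h1 | h1
    · rcases mul_eq_zero.mp h1 with h2 | h2
      · norm_num at h2
      · exact h0 h2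
    · exact absurd h1 (ne_of_lt hgb)
  have hcomp : ∀ i, 0 ≤ xs i ∧ 0 ≤ F xs i ∧ xs i * F xs i = 0 :=
    fun i => phi_eq_zero_iff.mp (hphi0 i)
  -- build the solution of the AVE
  refine ⟨xs - F xs, ?_⟩
  have habs : (fun i => |(xs - F xs) i|) = xs + F xs := by
    funext i
    obtain ⟨hx0, hb0, hxb⟩ := hcomp i
    rw [Pi.sub_apply, Pi.add_apply]
    rcases mul_eq_zero.mp hxb with h0 | h0
    · rw [h0, zero_sub, abs_neg, abs_of_nonneg hb0, zero_add]
    · rw [h0, sub_zero, abs_of_nonneg hx0, add_zero]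
  rw [habs]
  have hSM : (1 - S) * M = 1 + S := by
    rw [hM, ← Matrix.mul_assoc, Matrix.mul_nonsing_inv _ hdet, Matrix.one_mul]
  have hqc : (1 - S).mulVec qv = -c := by
    rw [hqv, Matrix.mulVec_neg, Matrix.mulVec_mulVec, Matrix.mul_nonsing_inv _ hdet,
      Matrix.one_mulVec]
  have hb_eq : (1 - S).mulVec (F xs) = (1 + S).mulVec xs - c := by
    rw [show F xs = M.mulVec xs + qv from rfl]
    rw [Matrix.mulVec_add, Matrix.mulVec_mulVec, hSM, hqc]
    abel
  have expand : (xs - F xs) + S.mulVec (xs + F xs)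
      = (1 + S).mulVec xs - (1 - S).mulVec (F xs) := by
    rw [Matrix.add_mulVec, Matrix.one_mulVec, Matrix.sub_mulVec, Matrix.one_mulVec,
      Matrix.mulVec_add]
    abel
  rw [expand, hb_eq]
  abel

end AVE

def IsPMatrix {n : ℕ} (A : Matrix (Fin n) (Fin n) ℝ) : Prop :=
  ∀ J : Finset (Fin n), J.Nonempty →
    0 < (A.submatrix (fun i : J => (i : Fin n)) (fun j : J => (j : Fin n))).det

theorem stmt_6 {n : ℕ} (S : Matrix (Fin n) (Fin n) ℝ) (hinv : IsUnit (1 - S)) :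
    IsPMatrix ((1 - S)⁻¹ * (1 + S)) ↔
      (∀ c : Fin n → ℝ, ∃! z : Fin n → ℝ, z + S.mulVec (fun i => |z i|) = c) := by
  classical
  have hdet0 : (1 - S).det ≠ 0 := ((Matrix.isUnit_iff_isUnit_det _).mp hinv).ne_zero
  constructor
  · intro hP
    have hcorner : ∀ s : Fin n → ℝ, (∀ i, s i = 1 ∨ s i = -1) →
        0 < (1 + S * Matrix.diagonal s).det * (1 - S).det := by
      intro s hs
      set J : Finset (Fin n) := Finset.univ.filter (fun i => s i = 1) with hJ
      have hsJ : s = fun j => if j ∈ J then (1 : ℝ) else -1 := by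
        funext j
        by_cases hj : j ∈ J
        · have := (Finset.mem_filter.mp hj).2
          simp [hj, this]
        · have hne : s j ≠ 1 := fun h => hj (Finset.mem_filter.mpr ⟨Finset.mem_univ _, h⟩)
          rcases hs j with h | h
          · exact absurd h hne
          · simp [hj, h]
      rcases Finset.eq_empty_or_nonempty J with hJe | hJn
      · have hconst : (fun j => if j ∈ J then (1 : ℝ) else -1) = fun _ : Fin n => (-1 : ℝ) := by
          funext j; rw [hJe]; simp
        rw [hsJ, hconst]
        have hdiagneg : Matrix.diagonal (fun _ : Fin n => (-1 : ℝ))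
            = (-1 : Matrix (Fin n) (Fin n) ℝ) := by
          ext i j
          by_cases hij : i = j <;> simp [Matrix.diagonal_apply, Matrix.one_apply, hij]
        rw [show (1 + S * Matrix.diagonal fun _ : Fin n => (-1 : ℝ)) = 1 - S by
          rw [hdiagneg, Matrix.mul_neg, Matrix.mul_one, ← sub_eq_add_neg]]
        exact mul_self_pos.mpr hdet0
      · have hkey := AVE.det_key S hinv J
        have hPJ := hP J hJn
        rw [hsJ, ← hkey]
        have h2 : 0 < (1 - S).det * (1 - S).det := mul_self_pos.mpr hdet0
        nlinarith
    have hcube : AVE.Hcube S := by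
      intro d hd h0
      have := AVE.cube_pos_of_corners S hcorner d hd
      rw [h0] at this
      simp at this
    intro c
    obtain ⟨z, hz⟩ := AVE.exists_solution hinv hcube c
    exact ⟨z, hz, fun z' hz' => AVE.uniq_of_Hcube hcube (hz'.trans hz.symm)⟩
  · intro huniq
    have hcube : AVE.Hcube S := AVE.Hcube_of_uniq huniq
    have hpos := AVE.cube_pos_of_Hcube hinv hcube
    intro J hJn
    have hkey := AVE.det_key S hinv J
    have hd : ∀ i, |(if i ∈ J then (1 : ℝ) else -1)| ≤ 1 := by
      intro i; split_ifs <;> simp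
    have h1 := hpos _ hd
    rw [← hkey] at h1
    have h2 : 0 < (1 - S).det * (1 - S).det := mul_self_pos.mpr hdet0
    nlinarith
end

section
/- Let S be a real n×n matrix such that det(I − SΣ) > 0 for every signature matrix Σ. Then the piecewise linear map φ : ℝⁿ → ℝⁿ defined by φ(z) = z + S|z| is a bijection. -/
open Matrix Filter

private lemma det_affine_exists {n : ℕ} (S : Matrix (Fin n) (Fin n) ℝ) (d : Fin n → ℝ) (j : Fin n) :
    ∃ A B : ℝ, ∀ t, (1 + S * Matrix.diagonal (Function.update d j t)).det = A + t * B := by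
  set N := (1 + S * Matrix.diagonal d)ᵀ with hN
  set u : Fin n → ℝ := fun i => if j = i then (1:ℝ) else 0 with hu
  set w : Fin n → ℝ := fun i => S i j with hw
  refine ⟨(N.updateRow j u).det, (N.updateRow j w).det, fun t => ?_⟩
  have key : (1 + S * Matrix.diagonal (Function.update d j t))ᵀ = N.updateRow j (u + t • w) := by
    ext k i
    by_cases hk : k = j
    · subst hk
      simp [hN, hu, hw, Matrix.updateRow_apply, Matrix.transpose_apply, Matrix.add_apply,
        Matrix.mul_diagonal, Matrix.one_apply, Function.update_self, eq_comm, mul_comm]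
    · simp [hN, Matrix.updateRow_apply, hk, Matrix.transpose_apply, Matrix.add_apply,
        Matrix.mul_diagonal, Function.update_of_ne hk, Matrix.one_apply, eq_comm, mul_comm]
  calc (1 + S * Matrix.diagonal (Function.update d j t)).det
      = ((1 + S * Matrix.diagonal (Function.update d j t))ᵀ).det := (Matrix.det_transpose _).symm
    _ = (N.updateRow j (u + t • w)).det := by rw [key]
    _ = _ := by rw [Matrix.det_updateRow_add, Matrix.det_updateRow_smul]

private lemma cube_det {n : ℕ} (S : Matrix (Fin n) (Fin n) ℝ)
    (h : ∀ σ : Fin n → ℝ, (∀ i, σ i = 1 ∨ σ i = -1) → 0 < (1 + S * Matrix.diagonal σ).det) :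
    ∀ d : Fin n → ℝ, (∀ i, |d i| ≤ 1) → 0 < (1 + S * Matrix.diagonal d).det := by
  suffices H : ∀ s : Finset (Fin n), ∀ d : Fin n → ℝ, (∀ i, |d i| ≤ 1) →
      (∀ i ∉ s, d i = 1 ∨ d i = -1) → 0 < (1 + S * Matrix.diagonal d).det by
    intro d hd
    exact H Finset.univ d hd (fun i hi => absurd (Finset.mem_univ i) hi)
  intro s
  induction s using Finset.induction_on with
  | empty => exact fun d hd h' => h d (fun i => h' i (Finset.notMem_empty i))
  | @insert j s hj ih =>
    intro d hd hout
    obtain ⟨A, B, hf⟩ := det_affine_exists S d j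
    have h1 : 0 < A + 1 * B := by
      rw [← hf 1]
      refine ih _ (fun i => ?_) (fun i hi => ?_)
      · rcases eq_or_ne i j with rfl | hne
        · simp
        · rw [Function.update_of_ne hne]; exact hd i
      · rcases eq_or_ne i j with rfl | hne
        · simp
        · rw [Function.update_of_ne hne]
          exact hout i (by simp [Finset.mem_insert, hne, hi])
    have h2 : 0 < A + (-1) * B := by
      rw [← hf (-1)]
      refine ih _ (fun i => ?_) (fun i hi => ?_)
      · rcases eq_or_ne i j with rfl | hne
        · simp
        · rw [Function.update_of_ne hne]; exact hd i
      · rcases eq_or_ne i j with rfl | hne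
        · simp
        · rw [Function.update_of_ne hne]
          exact hout i (by simp [Finset.mem_insert, hne, hi])
    have hdj := hd j
    have heq : (1 + S * Matrix.diagonal d).det = A + d j * B := by
      have := hf (d j)
      rwa [Function.update_eq_self] at this
    rw [abs_le] at hdj
    rw [heq]
    rcases eq_or_lt_of_le hdj.1 with hcase | hcase
    · rw [← hcase]; linarith
    · have c1 : 0 < (1 + d j)/2 := by linarith
      have c2 : 0 ≤ (1 - d j)/2 := by linarith
      nlinarith [mul_pos c1 (by linarith : (0:ℝ) < A + B),
        mul_nonneg c2 (by linarith : (0:ℝ) ≤ A - B)]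

set_option maxHeartbeats 2000000 in
theorem stmt_7 {n : ℕ} (S : Matrix (Fin n) (Fin n) ℝ)
    (h : ∀ E : Matrix (Fin n) (Fin n) ℝ, IsSignature E → 0 < (1 - S * E).det) :
    Function.Bijective (fun z : Fin n → ℝ => z + S.mulVec fun i => |z i|) := by
  classical
  set f : (Fin n → ℝ) → (Fin n → ℝ) := fun z => z + S.mulVec fun i => |z i| with hf
  -- determinant positivity on the whole cube
  have hdet : ∀ d : Fin n → ℝ, (∀ i, |d i| ≤ 1) → 0 < (1 + S * Matrix.diagonal d).det := by
    apply cube_det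
    intro σ hσ
    have hsig : IsSignature (Matrix.diagonal (fun i => -(σ i))) := by
      refine ⟨fun i => -(σ i), fun i => ?_, rfl⟩
      rcases hσ i with hh | hh
      · exact Or.inr (by show -σ i = -1; rw [hh])
      · exact Or.inl (by show -σ i = 1; rw [hh]; norm_num)
    have h2 := h (Matrix.diagonal (fun i => -(σ i))) hsig
    have e : (1 : Matrix (Fin n) (Fin n) ℝ) - S * Matrix.diagonal (fun i => -(σ i))
        = 1 + S * Matrix.diagonal σ := by
      have e2 : Matrix.diagonal (fun i => -(σ i)) = -Matrix.diagonal σ := by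
        rw [← Matrix.diagonal_neg]
      rw [e2, Matrix.mul_neg, sub_neg_eq_add]
    rwa [e] at h2
  have hf0 : f 0 = 0 := by
    have e : (fun i => |(0 : Fin n → ℝ) i|) = (0 : Fin n → ℝ) := funext fun i => by simp
    show (0 : Fin n → ℝ) + S *ᵥ (fun i => |(0 : Fin n → ℝ) i|) = 0
    rw [e, Matrix.mulVec_zero, add_zero]
  -- injectivity
  have hinj : Function.Injective f := by
    intro x y hxy
    set d : Fin n → ℝ := fun i => if x i = y i then 1 else (|x i| - |y i|)/(x i - y i) with hd
    have hd1 : ∀ i, |d i| ≤ 1 := by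
      intro i
      rcases eq_or_ne (x i) (y i) with he | he
      · simp [hd, he]
      · have hsub : x i - y i ≠ 0 := sub_ne_zero.mpr he
        simp only [hd, if_neg he]
        rw [abs_div, div_le_one (abs_pos.mpr hsub)]
        exact abs_abs_sub_abs_le_abs_sub _ _
    have hkey : (1 + S * Matrix.diagonal d).mulVec (x - y) = 0 := by
      have e1 : (1 + S * Matrix.diagonal d).mulVec (x - y)
          = (x - y) + S.mulVec (fun i => d i * (x i - y i)) := by
        have e0 : (Matrix.diagonal d) *ᵥ (x - y) = fun i => d i * (x i - y i) := by
          funext i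
          exact Matrix.mulVec_diagonal d (x - y) i
        rw [Matrix.add_mulVec, Matrix.one_mulVec, ← Matrix.mulVec_mulVec, e0]
      have e2 : (fun i => d i * (x i - y i)) = (fun i => |x i|) - (fun i => |y i|) := by
        funext i
        show d i * (x i - y i) = |x i| - |y i|
        rcases eq_or_ne (x i) (y i) with he | he
        · simp [hd, he]
        · have hsub : x i - y i ≠ 0 := sub_ne_zero.mpr he
          simp only [hd, if_neg he]
          field_simp
      have e3 : (x - y) + (S.mulVec (fun i => |x i|) - S.mulVec (fun i => |y i|)) = f x - f y := by
        simp only [hf]; abel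
      rw [e1, e2, Matrix.mulVec_sub, e3, hxy, sub_self]
    have := Matrix.eq_zero_of_mulVec_eq_zero (hdet d hd1).ne' hkey
    exact sub_eq_zero.mp this
  constructor
  · exact hinj
  -- surjectivity
  rcases Nat.eq_zero_or_pos n with hn | hn
  · subst hn
    haveI : Subsingleton (Fin 0 → ℝ) := ⟨fun a b => funext fun i => Fin.elim0 i⟩
    exact fun y => ⟨y, Subsingleton.elim _ _⟩
  have i0 : Fin n := ⟨0, hn⟩
  -- homogeneity
  have hhom : ∀ (t : ℝ), 0 ≤ t → ∀ z, f (t • z) = t • f z := by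
    intro t ht z
    have e : (fun i => |(t • z) i|) = t • fun i => |z i| := by
      funext i
      simp [abs_mul, abs_of_nonneg ht]
    simp only [hf, e, Matrix.mulVec_smul, smul_add]
  -- continuity
  have hcont : Continuous f := by
    have e : f = fun z => z + S.mulVecLin (fun i => |z i|) := by
      funext z; simp [hf, Matrix.mulVecLin_apply]
    rw [e]
    exact continuous_id.add (S.mulVecLin.continuous_of_finiteDimensional.comp
      (continuous_pi fun i => (continuous_apply i).abs))
  -- the quadratic form
  set Q : (Fin n → ℝ) → ℝ := fun v => v ⬝ᵥ v with hQ
  have hQcont : Continuous Q := by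
    have : Q = fun v => ∑ i, v i * v i := rfl
    rw [this]
    exact continuous_finset_sum _ fun i _ => (continuous_apply i).mul (continuous_apply i)
  have hQnn : ∀ v, 0 ≤ Q v := fun v => Finset.sum_nonneg fun i _ => mul_self_nonneg _
  have hQpos : ∀ v, v ≠ 0 → 0 < Q v := by
    intro v hv
    obtain ⟨i, hi⟩ := Function.ne_iff.mp hv
    exact Finset.sum_pos' (fun j _ => mul_self_nonneg _)
      ⟨i, Finset.mem_univ i, mul_self_pos.mpr hi⟩
  have hQsmul : ∀ (t : ℝ) v, Q (t • v) = t^2 * Q v := by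
    intro t v
    simp only [hQ, smul_dotProduct, dotProduct_smul, smul_eq_mul]
    ring
  have hQexp : ∀ x y : Fin n → ℝ, Q (x - y) = Q x - 2*(x ⬝ᵥ y) + Q y := by
    intro x y
    simp only [hQ, sub_dotProduct, dotProduct_sub, dotProduct_comm y x]
    ring
  have hQneg : ∀ v : Fin n → ℝ, Q (-v) = Q v := by
    intro v
    simp [hQ]
  have hnormQ : ∀ v : Fin n → ℝ, ‖v‖^2 ≤ Q v := by
    intro v
    have h1 : ∀ i, |v i| ≤ Real.sqrt (Q v) := by
      intro i
      rw [show |v i| = Real.sqrt ((v i)^2) by rw [Real.sqrt_sq_eq_abs]]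
      apply Real.sqrt_le_sqrt
      have := Finset.single_le_sum (f := fun j => v j * v j)
        (fun j _ => mul_self_nonneg _) (Finset.mem_univ i)
      calc (v i)^2 = v i * v i := sq (v i) ▸ by ring
        _ ≤ Q v := this
    have h2 : ‖v‖ ≤ Real.sqrt (Q v) := by
      rw [pi_norm_le_iff_of_nonneg (Real.sqrt_nonneg _)]
      intro i; rw [Real.norm_eq_abs]; exact h1 i
    calc ‖v‖^2 ≤ Real.sqrt (Q v)^2 := by
          exact pow_le_pow_left₀ (norm_nonneg v) h2 2
      _ = Q v := Real.sq_sqrt (hQnn v)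
  -- minimum of Q ∘ f on the Q-sphere
  have hsphere : ∃ u : Fin n → ℝ, Q u = 1 ∧ ∀ v, Q v = 1 → Q (f u) ≤ Q (f v) := by
    have hclosed : IsClosed {z : Fin n → ℝ | Q z = 1} := isClosed_eq hQcont continuous_const
    have hsub : {z : Fin n → ℝ | Q z = 1} ⊆ Metric.closedBall 0 1 := by
      intro z hz
      rw [Metric.mem_closedBall, dist_zero_right]
      have h1 : ‖z‖^2 ≤ 1 := by rw [← hz]; exact hnormQ z
      nlinarith [norm_nonneg z]
    have hcpt : IsCompact {z : Fin n → ℝ | Q z = 1} :=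
      (isCompact_closedBall (0 : Fin n → ℝ) 1).of_isClosed_subset hclosed hsub
    have hne : {z : Fin n → ℝ | Q z = 1}.Nonempty := by
      refine ⟨Pi.single i0 1, ?_⟩
      show Q (Pi.single i0 1) = 1
      simp [hQ, dotProduct_single]
    obtain ⟨u, hu, humin⟩ := hcpt.exists_isMinOn hne ((hQcont.comp hcont).continuousOn)
    exact ⟨u, hu, fun v hv => humin hv⟩
  obtain ⟨u, hu1, humin⟩ := hsphere
  set c : ℝ := Q (f u) with hc'
  have hc : 0 < c := by
    apply hQpos
    intro hfu
    have hu0 : u ≠ 0 := by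
      intro h0
      rw [h0] at hu1
      simp [hQ] at hu1
    exact hu0 (hinj (hfu.trans hf0.symm))
  have hgrowth : ∀ z, c * Q z ≤ Q (f z) := by
    intro z
    rcases eq_or_ne z 0 with rfl | hz
    · simp [hf0, hQ]
    · set s := Real.sqrt (Q z) with hs'
      have hs : 0 < s := Real.sqrt_pos.mpr (hQpos z hz)
      have hs2 : s^2 = Q z := Real.sq_sqrt (hQnn z)
      have hscale : Q (s⁻¹ • z) = 1 := by
        rw [hQsmul, ← hs2]
        field_simp
      have h1 : c ≤ Q (f (s⁻¹ • z)) := humin _ hscale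
      have h2 : f z = s • f (s⁻¹ • z) := by
        rw [← hhom s hs.le, smul_inv_smul₀ hs.ne']
      calc c * Q z = Q z * c := mul_comm _ _
        _ ≤ Q z * Q (f (s⁻¹ • z)) := by
            exact mul_le_mul_of_nonneg_left h1 (hQnn z)
        _ = s^2 * Q (f (s⁻¹ • z)) := by rw [hs2]
        _ = Q (f z) := by rw [h2, hQsmul]
  -- surjectivity: minimize Q (f z - b)
  intro b
  set g : (Fin n → ℝ) → ℝ := fun z => Q (f z - b) with hg
  have hgcont : Continuous g := hQcont.comp (hcont.sub continuous_const)
  have hglb : ∀ z, c/2 * ‖z‖^2 - Q b ≤ g z := by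
    intro z
    have e1 : Q (f z)/2 - Q b ≤ Q (f z - b) := by
      have h0 := hQnn (f z - (2:ℝ) • b)
      have e2 := hQexp (f z) ((2:ℝ) • b)
      have e3 := hQexp (f z) b
      have e4 : f z ⬝ᵥ ((2:ℝ) • b) = 2 * (f z ⬝ᵥ b) := by
        rw [dotProduct_smul]; simp
      have e5 : Q ((2:ℝ) • b) = 4 * Q b := by rw [hQsmul]; norm_num
      rw [e2, e4, e5] at h0
      linarith
    have e6 := hgrowth z
    have e7 := hnormQ z
    nlinarith [mul_le_mul_of_nonneg_left e7 hc.le]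
  have htend : Filter.Tendsto g (Filter.cocompact _) Filter.atTop := by
    apply Filter.tendsto_atTop_mono hglb
    have h1 : Filter.Tendsto (fun r : ℝ => c/2 * r^2 - Q b) Filter.atTop Filter.atTop := by
      apply Filter.tendsto_atTop_add_const_right
      exact (tendsto_pow_atTop (by norm_num : (2:ℕ) ≠ 0)).const_mul_atTop (by positivity)
    exact h1.comp tendsto_norm_cocompact_atTop
  obtain ⟨z0, hz0⟩ := hgcont.exists_forall_le htend
  set r : Fin n → ℝ := b - f z0 with hr
  clear_value r
  set p : Fin n → ℝ := Sᵀ.mulVec r with hp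
  clear_value p
  -- directional inequalities at the minimizer
  have hdir : ∀ (i : Fin n) (cc : ℝ), cc = 1 ∨ cc = -1 →
      cc * r i + (if z0 i = 0 then 1 else (if 0 < z0 i then cc else -cc)) * p i ≤ 0 := by
    intro i cc hcc
    have hcabs : |cc| = 1 := by rcases hcc with rfl | rfl <;> simp
    set a : ℝ := if z0 i = 0 then 1 else (if 0 < z0 i then cc else -cc) with ha
    set u' : Fin n → ℝ := (Pi.single i cc : Fin n → ℝ) + a • S.mulVec (Pi.single i 1) with hu'
    have hcol : S.mulVec (Pi.single i 1) ⬝ᵥ r = p i := by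
      rw [Matrix.mulVec_single]
      show (∑ j, (fun k => S k i * 1) j * r j) = p i
      simp only [mul_one]
      rw [hp]
      show (∑ j, S j i * r j) = ∑ j, Sᵀ i j * r j
      simp [Matrix.transpose_apply]
    have hudot : u' ⬝ᵥ r = cc * r i + a * p i := by
      rw [hu', add_dotProduct, single_dotProduct, smul_dotProduct,
        smul_eq_mul, hcol]
    set t0 : ℝ := if z0 i = 0 then 1 else |z0 i| with ht0
    have ht0pos : 0 < t0 := by
      rw [ht0]
      split
      · norm_num
      · next hne => exact abs_pos.mpr hne
    have hstep : ∀ t : ℝ, 0 < t → t ≤ t0 → f (z0 + t • (Pi.single i cc : Fin n → ℝ)) = f z0 + t • u' := by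
      intro t ht ht'
      have habs : (fun k => |(z0 + t • (Pi.single i cc : Fin n → ℝ)) k|)
          = (fun k => |z0 k|) + t • (Pi.single i a : Fin n → ℝ) := by
        funext k
        show |z0 k + t * (Pi.single i cc : Fin n → ℝ) k| = |z0 k| + t * (Pi.single i a : Fin n → ℝ) k
        rcases eq_or_ne k i with rfl | hk
        · rw [Pi.single_eq_same, Pi.single_eq_same]
          rcases lt_trichotomy (z0 k) 0 with hz | hz | hz
          · have haa : a = -cc := by rw [ha]; rw [if_neg hz.ne, if_neg (by linarith)]
            have ht0' : t0 = -(z0 k) := by rw [ht0, if_neg hz.ne, abs_of_neg hz]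
            have hb : -t ≤ t * cc ∧ t * cc ≤ t := by
              constructor <;> nlinarith [abs_le.mp hcabs.le, ht.le]
            rw [haa, abs_of_neg hz, abs_of_nonpos (by nlinarith [hb.2] : z0 k + t * cc ≤ 0)]
            ring
          · have haa : a = 1 := by rw [ha, if_pos hz]
            rw [haa, hz]
            simp [abs_mul, abs_of_pos ht, hcabs]
          · have haa : a = cc := by rw [ha, if_neg hz.ne', if_pos hz]
            have ht0' : t0 = z0 k := by rw [ht0, if_neg hz.ne', abs_of_pos hz]
            have hb : -t ≤ t * cc ∧ t * cc ≤ t := by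
              constructor <;> nlinarith [abs_le.mp hcabs.le, ht.le]
            rw [haa, abs_of_pos hz, abs_of_nonneg (by nlinarith [hb.1] : 0 ≤ z0 k + t * cc)]
        · rw [Pi.single_eq_of_ne hk, Pi.single_eq_of_ne hk]
          simp
      have hsingle : (Pi.single i a : Fin n → ℝ) = a • (Pi.single i 1 : Fin n → ℝ) := by
        funext k
        rcases eq_or_ne k i with rfl | hk
        · simp
        · simp [Pi.single_eq_of_ne hk]
      show (z0 + t • (Pi.single i cc : Fin n → ℝ)) + S *ᵥ (fun k => |(z0 + t • (Pi.single i cc : Fin n → ℝ)) k|)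
          = f z0 + t • u'
      rw [habs, hsingle, Matrix.mulVec_add, Matrix.mulVec_smul, Matrix.mulVec_smul]
      show z0 + t • (Pi.single i cc : Fin n → ℝ) + ((S *ᵥ fun k => |z0 k|) + t • a • (S *ᵥ Pi.single i 1))
          = (z0 + S *ᵥ fun k => |z0 k|) + t • ((Pi.single i cc : Fin n → ℝ) + a • (S *ᵥ Pi.single i 1))
      rw [smul_add]
      abel
    have hineq : u' ⬝ᵥ r ≤ 0 := by
      by_contra hpos
      push_neg at hpos
      set t : ℝ := min t0 ((u' ⬝ᵥ r) / (Q u' + 1)) with ht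
      have hQu1 : 0 < Q u' + 1 := by nlinarith [hQnn u']
      have htpos : 0 < t := lt_min ht0pos (div_pos hpos hQu1)
      have h1 := hz0 (z0 + t • (Pi.single i cc : Fin n → ℝ))
      simp only [hg] at h1
      rw [hstep t htpos (min_le_left _ _)] at h1
      have e1 : f z0 + t • u' - b = t • u' - r := by rw [hr]; abel
      have e2 : f z0 - b = -r := by rw [hr]; abel
      have hsm0 : (t • u') ⬝ᵥ r = t * (u' ⬝ᵥ r) := by
        rw [smul_dotProduct]; simp
      have hQt : Q (t • u' - r) = t^2 * Q u' - 2*(t * (u' ⬝ᵥ r)) + Q r := by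
        rw [hQexp (t • u') r, hsm0, hQsmul]
      rw [e2, hQneg, e1, hQt] at h1
      have hdle : t * (Q u' + 1) ≤ u' ⬝ᵥ r := by
        have := min_le_right t0 ((u' ⬝ᵥ r) / (Q u' + 1))
        calc t * (Q u' + 1) ≤ ((u' ⬝ᵥ r) / (Q u' + 1)) * (Q u' + 1) :=
              mul_le_mul_of_nonneg_right this hQu1.le
          _ = u' ⬝ᵥ r := div_mul_cancel₀ _ hQu1.ne'
      nlinarith [mul_pos htpos hpos, mul_le_mul_of_nonneg_left hdle htpos.le, hQnn u']
    rw [hudot] at hineq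
    exact hineq
  -- build the diagonal vector d and conclude r = 0
  set dvec : Fin n → ℝ := fun i =>
    if z0 i = 0 then (if p i = 0 then 0 else -(r i)/(p i)) else (if 0 < z0 i then 1 else -1)
    with hdv
  have hBineq : ∀ i, z0 i = 0 → |r i| + p i ≤ 0 := by
    intro i hzi
    have h1 := hdir i 1 (Or.inl rfl)
    have h2 := hdir i (-1) (Or.inr rfl)
    rw [if_pos hzi] at h1 h2
    rcases abs_cases (r i) with ⟨he, _⟩ | ⟨he, _⟩ <;> rw [he] <;> linarith
  have hd1 : ∀ i, |dvec i| ≤ 1 := by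
    intro i
    rw [hdv]
    show |if z0 i = 0 then (if p i = 0 then 0 else -(r i)/(p i)) else (if 0 < z0 i then 1 else -1)| ≤ 1
    split
    · next hzi =>
      split
      · simp
      · next hpi =>
        have hb := hBineq i hzi
        rw [abs_div, abs_neg, div_le_one (abs_pos.mpr hpi)]
        have : |p i| = -(p i) := abs_of_nonpos (by nlinarith [abs_nonneg (r i)])
        linarith [abs_nonneg (r i), this.symm.le, this.le, hb]
    · split <;> simp
  have hsys : ∀ i, r i + dvec i * p i = 0 := by
    intro i
    rw [hdv]
    show r i + (if z0 i = 0 then (if p i = 0 then 0 else -(r i)/(p i)) else (if 0 < z0 i then 1 else -1)) * p i = 0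
    split
    · next hzi =>
      have hb := hBineq i hzi
      split
      · next hpi =>
        have : r i = 0 := by
          rw [hpi] at hb
          have := abs_nonneg (r i)
          have h0 : |r i| = 0 := le_antisymm (by linarith) this
          exact abs_eq_zero.mp h0
        rw [this, hpi]; ring
      · next hpi => field_simp; ring
    · next hzi =>
      have h1 := hdir i 1 (Or.inl rfl)
      have h2 := hdir i (-1) (Or.inr rfl)
      rw [if_neg hzi] at h1 h2
      split
      · next hpos =>
        rw [if_pos hpos] at h1 h2
        linarith
      · next hpos =>
        rw [if_neg hpos] at h1 h2
        linarith
  have hker : (1 + Matrix.diagonal dvec * Sᵀ).mulVec r = 0 := by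
    rw [Matrix.add_mulVec, Matrix.one_mulVec, ← Matrix.mulVec_mulVec]
    funext i
    show r i + (Matrix.diagonal dvec *ᵥ (Sᵀ *ᵥ r)) i = 0
    rw [Matrix.mulVec_diagonal, ← hp]
    exact hsys i
  have hdet2 : (1 + Matrix.diagonal dvec * Sᵀ).det = (1 + S * Matrix.diagonal dvec).det := by
    rw [← Matrix.det_transpose (1 + Matrix.diagonal dvec * Sᵀ)]
    congr 1
    rw [Matrix.transpose_add, Matrix.transpose_one, Matrix.transpose_mul,
      Matrix.transpose_transpose, Matrix.diagonal_transpose]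
  have hr0 : r = 0 := by
    apply Matrix.eq_zero_of_mulVec_eq_zero _ hker
    rw [hdet2]
    exact (hdet dvec hd1).ne'
  refine ⟨z0, ?_⟩
  show f z0 = b
  have hb0 : b - f z0 = 0 := by rw [← hr]; exact hr0
  exact (sub_eq_zero.mp hb0).symm
end

section
/- Let S be a real n×n matrix such that every real eigenvalue λ of Σ'S, for every signature matrix Σ', satisfies |λ| < 1 (i.e., ρ₀ˢ(S) < 1). Let z, ĉ ∈ ℝⁿ and a signature matrix Σ satisfy Σz = |z| and (I − SΣ)z = ĉ, and assume that I − SΣ is invertible with A := (I − SΣ)⁻¹ strictly diagonally dominant with a positive diagonal. Then for every index i such that |ĉ_i| = max_k |ĉ_k|, it holds that sign(z_i) = sign(ĉ_i). -/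
theorem stmt_8 {n : ℕ} (S E : Matrix (Fin n) (Fin n) ℝ) (z c : Fin n → ℝ)
    (hrho : ∀ E', IsSignature E' → ∀ lam : ℝ, IsRealEigenvalue (E' * S) lam → |lam| < 1)
    (hE : IsSignature E)
    (hz : E.mulVec z = fun i => |z i|)
    (hc : (1 - S * E).mulVec z = c)
    (hinv : IsUnit (1 - S * E))
    (hA : ∀ i, ∑ j ∈ Finset.univ.erase i, |(1 - S * E)⁻¹ i j| < (1 - S * E)⁻¹ i i) :
    ∀ i, (∀ k, |c k| ≤ |c i|) → Real.sign (z i) = Real.sign (c i) := by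
  set A := (1 - S * E)⁻¹ with hAdef
  have hdet : IsUnit (1 - S * E).det := (Matrix.isUnit_iff_isUnit_det _).mp hinv
  have hzA : z = A.mulVec c := by
    rw [← hc, Matrix.mulVec_mulVec, Matrix.nonsing_inv_mul _ hdet, Matrix.one_mulVec]
  intro i hi
  have hAii : 0 < A i i :=
    lt_of_le_of_lt (Finset.sum_nonneg fun j _ => abs_nonneg _) (hA i)
  have hzi : z i = A i i * c i + ∑ j ∈ Finset.univ.erase i, A i j * c j := by
    rw [hzA]
    simp only [Matrix.mulVec, dotProduct]
    exact (Finset.add_sum_erase _ _ (Finset.mem_univ i)).symm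
  have hrest : |∑ j ∈ Finset.univ.erase i, A i j * c j| < A i i * |c i| ∨ c i = 0 := by
    by_cases hci : c i = 0
    · exact Or.inr hci
    · left
      calc |∑ j ∈ Finset.univ.erase i, A i j * c j|
          ≤ ∑ j ∈ Finset.univ.erase i, |A i j * c j| := Finset.abs_sum_le_sum_abs _ _
        _ ≤ ∑ j ∈ Finset.univ.erase i, |A i j| * |c i| := by
            refine Finset.sum_le_sum fun j _ => ?_
            rw [abs_mul]
            exact mul_le_mul_of_nonneg_left (hi j) (abs_nonneg _)
        _ = (∑ j ∈ Finset.univ.erase i, |A i j|) * |c i| := by rw [Finset.sum_mul]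
        _ < A i i * |c i| := by
            apply mul_lt_mul_of_pos_right (hA i)
            exact abs_pos.mpr hci
  rcases hrest with hrest | hci
  · rcases lt_trichotomy (c i) 0 with h | h | h
    · have : z i < 0 := by
        have := abs_lt.mp hrest
        rw [abs_of_neg h] at hrest
        nlinarith [abs_lt.mp hrest]
      rw [Real.sign_of_neg this, Real.sign_of_neg h]
    · rw [h, abs_zero, mul_zero] at hrest
      exact absurd hrest (abs_nonneg _).not_gt
    · have : 0 < z i := by
        rw [abs_of_pos h] at hrest
        nlinarith [abs_lt.mp hrest]
      rw [Real.sign_of_pos this, Real.sign_of_pos h]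
  · have hc0 : c = 0 := by
      funext k
      have := hi k
      rw [hci] at this
      simpa using abs_nonpos_iff.mp (by simpa using this)
    have : z = 0 := by rw [hzA, hc0, Matrix.mulVec_zero]
    simp [this, hci, hc0]
end

section
/- Let S be an irreducible real n×n matrix with ‖S‖∞ ≤ 1/2. Then I − S is invertible and its inverse A⁻¹ := (I − S)⁻¹ is strictly diagonally dominant with a positive diagonal, i.e., (A⁻¹)_ii > ∑_{j≠i} |(A⁻¹)_ij| for every row i. -/
open Matrix Finset

private lemma row_bound {n : ℕ} (S : Matrix (Fin n) (Fin n) ℝ)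
    (hS : ∀ i, ∑ j, |S i j| ≤ 1 / 2) (x : Fin n → ℝ) (l : Fin n) :
    |(S.mulVec x) l| ≤ (1/2) * ‖x‖ := by
  have hx : ∀ m, |x m| ≤ ‖x‖ := fun m => by
    simpa [Real.norm_eq_abs] using norm_le_pi_norm x m
  have h0 : (0:ℝ) ≤ ‖x‖ := norm_nonneg _
  calc |(S.mulVec x) l| = |∑ m, S l m * x m| := by simp [Matrix.mulVec, dotProduct]
    _ ≤ ∑ m, |S l m * x m| := Finset.abs_sum_le_sum_abs _ _
    _ = ∑ m, |S l m| * |x m| := by simp [abs_mul]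
    _ ≤ ∑ m, |S l m| * ‖x‖ := Finset.sum_le_sum fun m _ =>
        mul_le_mul_of_nonneg_left (hx m) (abs_nonneg _)
    _ = (∑ m, |S l m|) * ‖x‖ := by rw [Finset.sum_mul]
    _ ≤ (1/2) * ‖x‖ := mul_le_mul_of_nonneg_right (hS l) h0

private lemma key_lemma {n : ℕ} (S : Matrix (Fin n) (Fin n) ℝ)
    (hirr : ∀ J : Finset (Fin n), J.Nonempty → J ≠ Finset.univ →
      ∃ i ∈ J, ∃ j ∉ J, S i j ≠ 0)
    (hS : ∀ i, ∑ j, |S i j| ≤ 1 / 2)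
    (x ε : Fin n → ℝ) (hx : ∀ l, x l = ε l + (S.mulVec x) l)
    (hε : ∀ j, |ε j| ≤ 1) (i : Fin n) (hi : ε i = 1) : 0 < x i := by
  have hxm : ∀ m, |x m| ≤ ‖x‖ := fun m => by
    simpa [Real.norm_eq_abs] using norm_le_pi_norm x m
  -- bound ‖x‖ ≤ 2
  have hM : ‖x‖ ≤ 2 := by
    have h1 : ‖x‖ ≤ 1 + (1/2) * ‖x‖ := by
      rw [pi_norm_le_iff_of_nonneg (by positivity)]
      intro l
      have := row_bound S hS x l
      have h2 : |x l| ≤ |ε l| + |(S.mulVec x) l| := by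
        rw [hx l]; exact abs_add_le _ _
      have := hε l
      simp only [Real.norm_eq_abs]
      linarith
    linarith
  -- second bound: for each l, |x l| ≤ 1 + ∑ m, |S l m| * |x m|
  have habs : ∀ l, |x l| ≤ 1 + ∑ m, |S l m| * |x m| := by
    intro l
    have h2 : |x l| ≤ |ε l| + |(S.mulVec x) l| := by
      rw [hx l]; exact abs_add_le _ _
    have h3 : |(S.mulVec x) l| ≤ ∑ m, |S l m| * |x m| := by
      calc |(S.mulVec x) l| = |∑ m, S l m * x m| := by simp [Matrix.mulVec, dotProduct]
        _ ≤ ∑ m, |S l m * x m| := Finset.abs_sum_le_sum_abs _ _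
        _ = ∑ m, |S l m| * |x m| := by simp [abs_mul]
    have := hε l; linarith
  have hterm : ∀ l, ∑ m, |S l m| * |x m| ≤ 1 := by
    intro l
    calc ∑ m, |S l m| * |x m| ≤ ∑ m, |S l m| * 2 := Finset.sum_le_sum fun m _ =>
          mul_le_mul_of_nonneg_left ((hxm m).trans hM) (abs_nonneg _)
      _ = (∑ m, |S l m|) * 2 := by rw [Finset.sum_mul]
      _ ≤ 1 := by have := hS l; linarith
  -- the set J of indices where |x| = 2
  set J : Finset (Fin n) := Finset.univ.filter (fun m => 2 ≤ |x m|) with hJ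
  have hclosed : ∀ l ∈ J, ∀ m, S l m ≠ 0 → m ∈ J := by
    intro l hl m hm
    have hl2 : 2 ≤ |x l| := (Finset.mem_filter.mp hl).2
    have hge : 1 ≤ ∑ m, |S l m| * |x m| := by have := habs l; linarith
    -- each term |S l m| * (2 - |x m|) ≥ 0 and their sum ≤ 0
    have hsum0 : ∑ m, |S l m| * (2 - |x m|) ≤ 0 := by
      have : ∑ m, |S l m| * (2 - |x m|) = (∑ m, |S l m| * 2) - ∑ m, |S l m| * |x m| := by
        rw [← Finset.sum_sub_distrib]; congr 1; ext m; ring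
      rw [this]
      have h4 : (∑ m, |S l m| * 2) = (∑ m, |S l m|) * 2 := by rw [Finset.sum_mul]
      have := hS l
      linarith
    have hnn : ∀ m ∈ Finset.univ, (0:ℝ) ≤ |S l m| * (2 - |x m|) := fun m _ =>
      mul_nonneg (abs_nonneg _) (by have := (hxm m).trans hM; linarith)
    have hz : ∀ m ∈ (Finset.univ : Finset (Fin n)), |S l m| * (2 - |x m|) = 0 := by
      have hle : ∑ m, |S l m| * (2 - |x m|) = 0 :=
        le_antisymm hsum0 (Finset.sum_nonneg hnn)
      exact (Finset.sum_eq_zero_iff_of_nonneg hnn).mp hle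
    have := hz m (Finset.mem_univ m)
    have habsm : |S l m| ≠ 0 := abs_ne_zero.mpr hm
    have : 2 - |x m| = 0 := by
      rcases mul_eq_zero.mp this with h | h
      · exact absurd h habsm
      · exact h
    exact Finset.mem_filter.mpr ⟨Finset.mem_univ m, by linarith⟩
  by_contra hcon
  push_neg at hcon
  -- x i = 1 + (S x) i, so (S x) i ≤ -1, hence ∑ |S i m| |x m| ≥ 1
  have hxi : x i = 1 + (S.mulVec x) i := by rw [hx i, hi]
  have h3 : |(S.mulVec x) i| ≤ ∑ m, |S i m| * |x m| := by
    calc |(S.mulVec x) i| = |∑ m, S i m * x m| := by simp [Matrix.mulVec, dotProduct]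
      _ ≤ ∑ m, |S i m * x m| := Finset.abs_sum_le_sum_abs _ _
      _ = ∑ m, |S i m| * |x m| := by simp [abs_mul]
  have hSx : (S.mulVec x) i ≤ -1 := by linarith
  have hge : 1 ≤ ∑ m, |S i m| * |x m| := by
    have : 1 ≤ |(S.mulVec x) i| := by rw [abs_le'] at *; exact le_abs.mpr (Or.inr (by linarith))
    linarith
  -- same zero-sum argument for row i
  have hsum0 : ∑ m, |S i m| * (2 - |x m|) ≤ 0 := by
    have heq : ∑ m, |S i m| * (2 - |x m|) = (∑ m, |S i m| * 2) - ∑ m, |S i m| * |x m| := by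
      rw [← Finset.sum_sub_distrib]; congr 1; ext m; ring
    rw [heq]
    have h4 : (∑ m, |S i m| * 2) = (∑ m, |S i m|) * 2 := by rw [Finset.sum_mul]
    have := hS i
    linarith
  have hnn : ∀ m ∈ Finset.univ, (0:ℝ) ≤ |S i m| * (2 - |x m|) := fun m _ =>
    mul_nonneg (abs_nonneg _) (by have := (hxm m).trans hM; linarith)
  have hz : ∀ m ∈ (Finset.univ : Finset (Fin n)), |S i m| * (2 - |x m|) = 0 :=
    (Finset.sum_eq_zero_iff_of_nonneg hnn).mp (le_antisymm hsum0 (Finset.sum_nonneg hnn))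
  have hrowJ : ∀ m, S i m ≠ 0 → m ∈ J := by
    intro m hm
    have h := hz m (Finset.mem_univ m)
    have habsm : |S i m| ≠ 0 := abs_ne_zero.mpr hm
    have h2 : 2 - |x m| = 0 := by
      rcases mul_eq_zero.mp h with h | h
      · exact absurd h habsm
      · exact h
    exact Finset.mem_filter.mpr ⟨Finset.mem_univ m, by linarith⟩
  -- some m with S i m ≠ 0 exists
  have hex : ∃ m, S i m ≠ 0 := by
    by_contra hnone
    push_neg at hnone
    have : ∑ m, |S i m| * |x m| = 0 := by
      apply Finset.sum_eq_zero; intro m _; rw [hnone m]; simp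
    linarith
  obtain ⟨m0, hm0⟩ := hex
  have hJne : J.Nonempty := ⟨m0, hrowJ m0 hm0⟩
  -- i ∉ J since x i = 0
  have hxi0 : x i = 0 := by
    have : (-1:ℝ) ≤ (S.mulVec x) i := by
      have := h3; have := hterm i
      have : |(S.mulVec x) i| ≤ 1 := le_trans h3 (hterm i)
      linarith [abs_le.mp this]
    linarith
  have hiJ : i ∉ J := by
    intro h
    have : 2 ≤ |x i| := (Finset.mem_filter.mp h).2
    rw [hxi0] at this; simp at this; linarith
  have hJne' : J ≠ Finset.univ := fun h => hiJ (h ▸ Finset.mem_univ i)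
  obtain ⟨l, hl, m, hm, hSlm⟩ := hirr J hJne hJne'
  exact hm (hclosed l hl m hSlm)

theorem stmt_9 {n : ℕ} (S : Matrix (Fin n) (Fin n) ℝ)
    (hirr : ∀ J : Finset (Fin n), J.Nonempty → J ≠ Finset.univ →
      ∃ i ∈ J, ∃ j ∉ J, S i j ≠ 0)
    (hS : ∀ i, ∑ j, |S i j| ≤ 1 / 2) :
    IsUnit (1 - S) ∧
      ∀ i, ∑ j ∈ Finset.univ.erase i, |(1 - S)⁻¹ i j| < (1 - S)⁻¹ i i := by
  have hunit : IsUnit (1 - S) := by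
    rw [← Matrix.mulVec_injective_iff_isUnit]
    intro x y hxy
    have hz : (1 - S).mulVec (x - y) = 0 := by
      rw [Matrix.mulVec_sub, hxy, sub_self]
    set z := x - y with hzdef
    have hz2 : z = S.mulVec z := by
      have := hz
      rw [Matrix.sub_mulVec, Matrix.one_mulVec, sub_eq_zero] at this
      exact this
    have hnz : ‖z‖ ≤ (1/2) * ‖z‖ := by
      rw [pi_norm_le_iff_of_nonneg (by positivity)]
      intro l
      have := row_bound S hS z l
      rw [Real.norm_eq_abs]
      calc |z l| = |(S.mulVec z) l| := by rw [← hz2]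
        _ ≤ (1/2) * ‖z‖ := this
    have : ‖z‖ = 0 := by have := norm_nonneg z; linarith
    have : z = 0 := norm_eq_zero.mp this
    have := sub_eq_zero.mp (hzdef ▸ this)
    exact this
  refine ⟨hunit, fun i => ?_⟩
  set B := (1 - S)⁻¹ with hB
  have hmul : (1 - S) * B = 1 := Matrix.mul_nonsing_inv _ ((Matrix.isUnit_iff_isUnit_det _).mp hunit)
  set ε : Fin n → ℝ := fun j => if j = i then 1 else (if 0 ≤ B i j then -1 else 1) with hε
  set x := B.mulVec ε with hxdef
  have hfix : ∀ l, x l = ε l + (S.mulVec x) l := by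
    intro l
    have : (1 - S).mulVec x = ε := by
      rw [hxdef, Matrix.mulVec_mulVec, hmul, Matrix.one_mulVec]
    have h := congrFun this l
    rw [Matrix.sub_mulVec, Matrix.one_mulVec] at h
    simp only [Pi.sub_apply] at h
    linarith
  have hεb : ∀ j, |ε j| ≤ 1 := by
    intro j; rw [hε]; dsimp only
    split <;> [skip; split] <;> simp
  have hεi : ε i = 1 := by rw [hε]; simp
  have hpos : 0 < x i := key_lemma S hirr hS x ε hfix hεb i hεi
  have hxi : x i = B i i - ∑ j ∈ Finset.univ.erase i, |B i j| := by
    rw [hxdef]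
    show ∑ j, B i j * ε j = _
    rw [← Finset.add_sum_erase _ _ (Finset.mem_univ i), hεi, mul_one]
    congr 1
    rw [← Finset.sum_neg_distrib]
    apply Finset.sum_congr rfl
    intro j hj
    have hji : j ≠ i := Finset.ne_of_mem_erase hj
    rw [hε]
    simp only [if_neg hji]
    split
    · rename_i h; rw [abs_of_nonneg h]; ring
    · rename_i h; push_neg at h; rw [abs_of_neg h]; ring
  rw [hxi] at hpos
  linarith
end

section
/- Let S be a real n×n matrix with ‖S‖∞ < 1/2. Then I − S is invertible and its inverse A⁻¹ := (I − S)⁻¹ is strictly diagonally dominant with a positive diagonal, i.e., (A⁻¹)_ii > ∑_{j≠i} |(A⁻¹)_ij| for every row i. -/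
open Finset

attribute [local instance] Matrix.linftyOpNormedRing Matrix.linftyOpNormedAlgebra

theorem stmt_10 {n : ℕ} (S : Matrix (Fin n) (Fin n) ℝ)
    (hS : ∀ i, ∑ j, |S i j| < 1 / 2) :
    IsUnit (1 - S) ∧
      ∀ i, ∑ j ∈ Finset.univ.erase i, |(1 - S)⁻¹ i j| < (1 - S)⁻¹ i i := by
  classical
  -- row sums bounded by linfty norm
  have key : ∀ (M : Matrix (Fin n) (Fin n) ℝ) (i : Fin n), ∑ j, |M i j| ≤ ‖M‖ := by
    intro M i
    rw [Matrix.linfty_opNorm_def]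
    calc ∑ j, |M i j| = ((∑ j, ‖M i j‖₊ : NNReal) : ℝ) := by
          push_cast
          simp [Real.norm_eq_abs]
      _ ≤ _ :=
          NNReal.coe_le_coe.2 (Finset.le_sup (f := fun i => ∑ j, ‖M i j‖₊) (Finset.mem_univ i))
  have hnormS : ‖S‖ < 1 / 2 := by
    rw [Matrix.linfty_opNorm_def]
    rw [show ((1 : ℝ) / 2) = ((1 / 2 : NNReal) : ℝ) by norm_num]
    rw [NNReal.coe_lt_coe]
    refine (Finset.sup_lt_iff (show (⊥ : NNReal) < 1 / 2 by norm_num)).2 ?_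
    intro i _
    rw [← NNReal.coe_lt_coe]
    push_cast
    simpa [Real.norm_eq_abs] using hS i
  have hS1 : ‖S‖ < 1 := lt_trans hnormS (by norm_num)
  have hU : IsUnit (1 - S) := isUnit_one_sub_of_norm_lt_one hS1
  refine ⟨hU, ?_⟩
  set B : Matrix (Fin n) (Fin n) ℝ := ((hU.unit⁻¹ : (Matrix (Fin n) (Fin n) ℝ)ˣ) : Matrix (Fin n) (Fin n) ℝ) with hBdef
  have hBinv : (1 - S)⁻¹ = B := by
    rw [hBdef, Matrix.coe_units_inv, IsUnit.unit_spec]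
  have hmul : (1 - S) * B = 1 := by
    have h := hU.unit.mul_inv
    rwa [IsUnit.unit_spec] at h
  have hid : B - 1 = S * B := by
    rw [sub_mul, one_mul] at hmul
    rw [← hmul]
    abel
  -- norm of identity ≤ 1
  have hone : ‖(1 : Matrix (Fin n) (Fin n) ℝ)‖ ≤ 1 := by
    rw [Matrix.linfty_opNorm_def]
    rw [show ((1 : ℝ)) = ((1 : NNReal) : ℝ) by norm_num]
    rw [NNReal.coe_le_coe]
    refine Finset.sup_le ?_
    intro i _
    have : ∀ x : Fin n, ‖(1 : Matrix (Fin n) (Fin n) ℝ) i x‖₊ = if i = x then 1 else 0 := by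
      intro x
      by_cases h : i = x <;> simp [Matrix.one_apply, h]
    rw [Finset.sum_congr rfl fun x _ => this x]
    simp
  have hb : ‖B‖ ≤ ‖B - 1‖ + 1 := by
    calc ‖B‖ = ‖(B - 1) + 1‖ := by rw [sub_add_cancel]
      _ ≤ ‖B - 1‖ + ‖(1 : Matrix (Fin n) (Fin n) ℝ)‖ := norm_add_le _ _
      _ ≤ ‖B - 1‖ + 1 := by linarith
  have ha : ‖B - 1‖ ≤ ‖S‖ * ‖B‖ := by rw [hid]; exact norm_mul_le _ _
  have ha0 : (0 : ℝ) ≤ ‖B - 1‖ := norm_nonneg _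
  have hs0 : (0 : ℝ) ≤ ‖S‖ := norm_nonneg _
  have hkey : ‖B - 1‖ < 1 := by
    have h1 : ‖S‖ * ‖B‖ ≤ ‖S‖ * (‖B - 1‖ + 1) :=
      mul_le_mul_of_nonneg_left hb hs0
    have h2 : ‖S‖ * ‖B - 1‖ ≤ (1 / 2) * ‖B - 1‖ :=
      mul_le_mul_of_nonneg_right (le_of_lt hnormS) ha0
    nlinarith
  intro i
  rw [hBinv]
  have hrow : ∑ j, |(B - 1) i j| ≤ ‖B - 1‖ := key _ i
  have hrow' : ∑ j, |(B - 1) i j| < 1 := lt_of_le_of_lt hrow hkey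
  rw [← Finset.add_sum_erase Finset.univ _ (Finset.mem_univ i)] at hrow'
  have hdiag : |(B - 1) i i| = |B i i - 1| := by
    simp [Matrix.sub_apply, Matrix.one_apply]
  have hoff : ∑ j ∈ Finset.univ.erase i, |(B - 1) i j| = ∑ j ∈ Finset.univ.erase i, |B i j| := by
    refine Finset.sum_congr rfl ?_
    intro j hj
    have : j ≠ i := Finset.ne_of_mem_erase hj
    simp [Matrix.sub_apply, Matrix.one_apply_ne (Ne.symm this)]
  rw [hdiag, hoff] at hrow'
  have := neg_abs_le (B i i - 1)
  linarith
end

section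
/- Let S be a real n×n matrix with ‖S‖∞ < 1/2, and let z, ĉ ∈ ℝⁿ satisfy z − S|z| = ĉ. Then for every index i with |ĉ_i| = max_k |ĉ_k|, it holds that sign(z_i) = sign(ĉ_i). -/
theorem stmt_11 {n : ℕ} (S : Matrix (Fin n) (Fin n) ℝ)
    (hS : ∀ i, ∑ j, |S i j| < 1 / 2) (z c : Fin n → ℝ)
    (h : z - S.mulVec (fun i => |z i|) = c) :
    ∀ i, (∀ k, |c k| ≤ |c i|) → Real.sign (z i) = Real.sign (c i) := by
  intro i hi
  have hz : ∀ k, z k = c k + ∑ j, S k j * |z j| := by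
    intro k
    have hk := congrFun h k
    simp only [Pi.sub_apply, Matrix.mulVec, dotProduct] at hk
    linarith
  obtain ⟨k0, -, hk0⟩ := Finset.exists_max_image Finset.univ (fun k => |z k|)
    ⟨i, Finset.mem_univ i⟩
  set M := |z k0| with hM
  have hMnn : 0 ≤ M := abs_nonneg _
  have hbound : ∀ k, abs (∑ j, S k j * |z j|) ≤ (∑ j, |S k j|) * M := by
    intro k
    calc abs (∑ j, S k j * |z j|) ≤ ∑ j, abs (S k j * |z j|) :=
        Finset.abs_sum_le_sum_abs _ _
      _ = ∑ j, |S k j| * |z j| := by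
          refine Finset.sum_congr rfl fun j _ => ?_
          rw [abs_mul, abs_abs]
      _ ≤ ∑ j, |S k j| * M := by
          refine Finset.sum_le_sum fun j _ => ?_
          exact mul_le_mul_of_nonneg_left (hk0 j (Finset.mem_univ j)) (abs_nonneg _)
      _ = (∑ j, |S k j|) * M := by rw [Finset.sum_mul]
  rcases eq_or_lt_of_le hMnn with hM0 | hMpos
  · -- M = 0, so z = 0 and c i = 0
    have hzi : z i = 0 := by
      have h1 := hk0 i (Finset.mem_univ i)
      have h2 : |z i| ≤ 0 := by rw [← hM0] at h1; exact h1
      exact abs_eq_zero.mp (le_antisymm h2 (abs_nonneg _))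
    have hci : c i = 0 := by
      have hti : abs (∑ j, S i j * |z j|) ≤ 0 := by
        have h3 := hbound i
        rw [← hM0] at h3
        simpa using h3
      have h4 : (∑ j, S i j * |z j|) = 0 := abs_eq_zero.mp (le_antisymm hti (abs_nonneg _))
      have h5 := hz i
      rw [hzi, h4] at h5
      linarith
    rw [hzi, hci]
  · -- M > 0
    have hti : abs (∑ j, S i j * |z j|) < M / 2 := by
      calc abs (∑ j, S i j * |z j|) ≤ (∑ j, |S i j|) * M := hbound i
        _ < (1/2) * M := mul_lt_mul_of_pos_right (hS i) hMpos
        _ = M / 2 := by ring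
    have hMc : M / 2 < |c i| := by
      have h1 : M = abs (c k0 + ∑ j, S k0 j * |z j|) := by rw [hM, hz k0]
      have h2 : abs (c k0 + ∑ j, S k0 j * |z j|) ≤ |c k0| + abs (∑ j, S k0 j * |z j|) :=
        abs_add_le _ _
      have h3 : abs (∑ j, S k0 j * |z j|) < M / 2 := by
        calc abs (∑ j, S k0 j * |z j|) ≤ (∑ j, |S k0 j|) * M := hbound k0
          _ < (1/2) * M := mul_lt_mul_of_pos_right (hS k0) hMpos
          _ = M / 2 := by ring
      have h4 := hi k0
      linarith
    have hti' : abs (∑ j, S i j * |z j|) < |c i| := lt_trans hti hMc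
    have hzi := hz i
    rcases lt_trichotomy (c i) 0 with hc | hc | hc
    · have hneg : z i < 0 := by
        have h6 := abs_lt.mp hti'
        rw [abs_of_neg hc] at h6
        linarith [h6.2]
      rw [Real.sign_of_neg hneg, Real.sign_of_neg hc]
    · exfalso
      rw [hc] at hti'
      simp at hti'
      exact absurd hti' (not_lt.mpr (abs_nonneg _))
    · have hpos : 0 < z i := by
        have h6 := abs_lt.mp hti'
        rw [abs_of_pos hc] at h6
        linarith [h6.1]
      rw [Real.sign_of_pos hpos, Real.sign_of_pos hc]
end

section
/- Let S be an irreducible real n×n matrix with ‖S‖∞ ≤ 1/2, and let z, ĉ ∈ ℝⁿ satisfy z − S|z| = ĉ. Then for every index i with |ĉ_i| = max_k |ĉ_k|, it holds that sign(z_i) = sign(ĉ_i). -/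
lemma key_stmt12 {n : ℕ} (S : Matrix (Fin n) (Fin n) ℝ)
    (hirr : ∀ J : Finset (Fin n), J.Nonempty → J ≠ Finset.univ →
      ∃ i ∈ J, ∃ j ∉ J, S i j ≠ 0)
    (hS : ∀ i, ∑ j, |S i j| ≤ 1 / 2) (z c : Fin n → ℝ)
    (h : z - S.mulVec (fun i => |z i|) = c)
    (i : Fin n) (hmax : ∀ k, |c k| ≤ |c i|) (hc : 0 < c i) : 0 < z i := by
  set w := S.mulVec (fun j => |z j|) with hw_def
  have hz : ∀ k, z k = c k + w k := by
    intro k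
    have := congrFun h k
    simp [Pi.sub_apply] at this
    linarith
  have hwsum : ∀ k, w k = ∑ j, S k j * |z j| := by
    intro k; simp [hw_def, Matrix.mulVec, dotProduct]
  obtain ⟨k0, -, hk0⟩ := Finset.exists_max_image Finset.univ (fun j => |z j|)
    ⟨i, Finset.mem_univ i⟩
  set M := |z k0| with hM_def
  have hM : ∀ j, |z j| ≤ M := fun j => hk0 j (Finset.mem_univ j)
  have hM0 : 0 ≤ M := abs_nonneg _
  have hwle : ∀ k, (∑ l, |S k l| * |z l|) ≤ M / 2 := by
    intro k
    calc (∑ l, |S k l| * |z l|) ≤ ∑ l, |S k l| * M :=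
          Finset.sum_le_sum fun l _ => mul_le_mul_of_nonneg_left (hM l) (abs_nonneg _)
      _ = (∑ l, |S k l|) * M := by rw [Finset.sum_mul]
      _ ≤ (1/2) * M := mul_le_mul_of_nonneg_right (hS k) hM0
      _ = M / 2 := by ring
  have hwabs : ∀ k, |w k| ≤ M / 2 := by
    intro k
    calc |w k| = |(∑ l, S k l * |z l|)| := by rw [hwsum]
      _ ≤ ∑ l, abs (S k l * |z l|) := Finset.abs_sum_le_sum_abs _ _
      _ = ∑ l, |S k l| * |z l| := by simp [abs_mul, abs_abs]
      _ ≤ M / 2 := hwle k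
  have hci : |c i| = c i := abs_of_pos hc
  have hM2c : M ≤ 2 * c i := by
    have h1 : |z k0| ≤ |c k0| + |w k0| := by rw [hz k0]; exact abs_add_le _ _
    have := hmax k0
    have := hwabs k0
    linarith
  by_contra hzi
  push_neg at hzi
  have h2cM : 2 * c i ≤ M := by
    have hwi : w i = z i - c i := by linarith [hz i]
    have : c i ≤ |w i| := by
      rw [hwi, abs_sub_comm]
      calc c i ≤ c i - z i := by linarith
        _ ≤ |c i - z i| := le_abs_self _
    have := hwabs i
    linarith
  have hMeq : M = 2 * c i := le_antisymm hM2c h2cM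
  have hMpos : 0 < M := by linarith
  have step : ∀ k, |z k| = M → ∀ j, S k j ≠ 0 → |z j| = M := by
    intro k hk j hSkj
    by_contra hne
    have hlt : |z j| < M := lt_of_le_of_ne (hM j) hne
    have h1 : M / 2 ≤ |w k| := by
      have hab : M ≤ |c k| + |w k| := by
        rw [← hk, hz k]; exact abs_add_le _ _
      have := hmax k
      linarith
    have hstrict : (∑ l, |S k l| * |z l|) < M / 2 := by
      have h2 : (∑ l, |S k l| * |z l|) < ∑ l, |S k l| * M :=
        Finset.sum_lt_sum (fun l _ => mul_le_mul_of_nonneg_left (hM l) (abs_nonneg _))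
          ⟨j, Finset.mem_univ j, mul_lt_mul_of_pos_left hlt (abs_pos.2 hSkj)⟩
      have h3 : (∑ l, |S k l|) * M ≤ (1/2) * M :=
        mul_le_mul_of_nonneg_right (hS k) hM0
      have h4 : (∑ l, |S k l| * M) = (∑ l, |S k l|) * M := (Finset.sum_mul _ _ _).symm
      linarith
    have h4 : |w k| ≤ ∑ l, |S k l| * |z l| := by
      calc |w k| = |(∑ l, S k l * |z l|)| := by rw [hwsum]
        _ ≤ ∑ l, abs (S k l * |z l|) := Finset.abs_sum_le_sum_abs _ _
        _ = ∑ l, |S k l| * |z l| := by simp [abs_mul, abs_abs]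
    linarith
  have hall : ∀ j, |z j| = M := by
    set J := Finset.univ.filter (fun j => |z j| = M) with hJ_def
    by_cases hJ : J = Finset.univ
    · intro j
      have hj : j ∈ J := hJ ▸ Finset.mem_univ j
      exact (Finset.mem_filter.1 hj).2
    · obtain ⟨k, hkJ, j, hjJ, hS0⟩ := hirr J ⟨k0, by simp [hJ_def, hM_def]⟩ hJ
      have hkM : |z k| = M := (Finset.mem_filter.1 hkJ).2
      exact absurd (Finset.mem_filter.2 ⟨Finset.mem_univ j, step k hkM j hS0⟩) hjJ
  have hzi2 : |z i| = 2 * c i := by rw [hall i, hMeq]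
  have hzival : z i = -(2 * c i) := by
    rw [abs_of_nonpos hzi] at hzi2; linarith
  have hwi : w i = z i - c i := by linarith [hz i]
  have : |w i| = 3 * c i := by
    rw [hwi, hzival, abs_of_nonpos (by linarith)]; ring
  have := hwabs i
  linarith

theorem stmt_12 {n : ℕ} (S : Matrix (Fin n) (Fin n) ℝ)
    (hirr : ∀ J : Finset (Fin n), J.Nonempty → J ≠ Finset.univ →
      ∃ i ∈ J, ∃ j ∉ J, S i j ≠ 0)
    (hS : ∀ i, ∑ j, |S i j| ≤ 1 / 2) (z c : Fin n → ℝ)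
    (h : z - S.mulVec (fun i => |z i|) = c) :
    ∀ i, (∀ k, |c k| ≤ |c i|) → Real.sign (z i) = Real.sign (c i) := by
  intro i hmax
  rcases lt_trichotomy (c i) 0 with h1 | h2 | h3
  · -- c i < 0 : apply key to -S, -z, -c
    have hirr' : ∀ J : Finset (Fin n), J.Nonempty → J ≠ Finset.univ →
        ∃ a ∈ J, ∃ j ∉ J, (-S) a j ≠ 0 := by
      intro J hJ1 hJ2
      obtain ⟨a, ha, j, hj, hne⟩ := hirr J hJ1 hJ2
      exact ⟨a, ha, j, hj, by simpa using hne⟩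
    have hS' : ∀ k, (∑ j, |(-S) k j|) ≤ 1 / 2 := by
      intro k; simpa using hS k
    have h' : (-z) - (-S).mulVec (fun j => |(-z) j|) = -c := by
      funext k
      have := congrFun h k
      simp only [Pi.sub_apply, Pi.neg_apply, Matrix.mulVec, dotProduct,
        Matrix.neg_apply, abs_neg, neg_mul, Finset.sum_neg_distrib] at this ⊢
      linarith
    have hmax' : ∀ k, |(-c) k| ≤ |(-c) i| := by
      intro k; simpa using hmax k
    have hc' : 0 < (-c) i := by simpa using h1
    have := key_stmt12 (-S) hirr' hS' (-z) (-c) h' i hmax' hc'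
    have hzneg : z i < 0 := by simpa using this
    rw [Real.sign_of_neg hzneg, Real.sign_of_neg h1]
  · -- c i = 0 : everything is zero
    have hc0 : ∀ k, c k = 0 := by
      intro k
      have := hmax k
      rw [h2, abs_zero] at this
      exact abs_eq_zero.1 (le_antisymm this (abs_nonneg _))
    obtain ⟨k0, -, hk0⟩ := Finset.exists_max_image Finset.univ (fun j => |z j|)
      ⟨i, Finset.mem_univ i⟩
    set M := |z k0| with hM_def
    have hM : ∀ j, |z j| ≤ M := fun j => hk0 j (Finset.mem_univ j)
    have hM0 : 0 ≤ M := abs_nonneg _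
    have hz : ∀ k, z k = S.mulVec (fun j => |z j|) k := by
      intro k
      have := congrFun h k
      simp [Pi.sub_apply, hc0 k] at this
      linarith
    have hwabs : |z k0| ≤ M / 2 := by
      rw [hz k0]
      calc |Matrix.mulVec S (fun j => |z j|) k0| = |(∑ l, S k0 l * |z l|)| := by
            simp [Matrix.mulVec, dotProduct]
        _ ≤ ∑ l, abs (S k0 l * |z l|) := Finset.abs_sum_le_sum_abs _ _
        _ = ∑ l, |S k0 l| * |z l| := by simp [abs_mul, abs_abs]
        _ ≤ ∑ l, |S k0 l| * M := Finset.sum_le_sum fun l _ =>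
            mul_le_mul_of_nonneg_left (hM l) (abs_nonneg _)
        _ = (∑ l, |S k0 l|) * M := by rw [Finset.sum_mul]
        _ ≤ (1/2) * M := mul_le_mul_of_nonneg_right (hS k0) hM0
        _ = M / 2 := by ring
    rw [← hM_def] at hwabs
    have hzi0 : z i = 0 := by
      have := hM i
      have : |z i| ≤ 0 := by linarith
      have := abs_nonneg (z i)
      have : |z i| = 0 := le_antisymm ‹|z i| ≤ 0› ‹0 ≤ |z i|›
      exact abs_eq_zero.1 this
    rw [hzi0, h2]
  · have := key_stmt12 S hirr hS z c h i hmax h3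
    rw [Real.sign_of_pos this, Real.sign_of_pos h3]
end

section
/- Let S be a strictly diagonally dominant real n×n matrix with ‖S‖∞ ≤ 2/3, and let z, ĉ ∈ ℝⁿ satisfy z − S|z| = ĉ. Then for every index i with |ĉ_i| = max_k |ĉ_k|, it holds that sign(z_i) = sign(ĉ_i). -/
theorem stmt_13 {n : ℕ} (S : Matrix (Fin n) (Fin n) ℝ)
    (hsdd : ∀ i, ∑ j ∈ Finset.univ.erase i, |S i j| < |S i i|)
    (hS : ∀ i, ∑ j, |S i j| ≤ 2 / 3) (z c : Fin n → ℝ)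
    (h : z - S.mulVec (fun i => |z i|) = c) :
    ∀ i, (∀ k, |c k| ≤ |c i|) → Real.sign (z i) = Real.sign (c i) := by
  intro i hi
  have hc : ∀ k, z k - ∑ j, S k j * |z j| = c k := by
    intro k
    have := congrFun h k
    simpa [Matrix.mulVec, dotProduct] using this
  obtain ⟨m, -, hm⟩ := Finset.exists_max_image Finset.univ (fun k => |z k|) ⟨i, Finset.mem_univ i⟩
  have hzm : ∀ k, |z k| ≤ |z m| := fun k => hm k (Finset.mem_univ k)
  have hzm0 : 0 ≤ |z m| := abs_nonneg _
  -- bound on sums of |S k j| * |z j|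
  have hsum : ∀ k : Fin n, abs (∑ j, S k j * |z j|) ≤ 2 / 3 * |z m| := by
    intro k
    calc abs (∑ j, S k j * |z j|) ≤ ∑ j, abs (S k j * |z j|) := Finset.abs_sum_le_sum_abs _ _
      _ ≤ ∑ j : Fin n, |S k j| * |z m| := by
          apply Finset.sum_le_sum
          intro j _
          rw [abs_mul, abs_abs]
          exact mul_le_mul_of_nonneg_left (hzm j) (abs_nonneg _)
      _ = (∑ j, |S k j|) * |z m| := (Finset.sum_mul _ _ _).symm
      _ ≤ 2 / 3 * |z m| := mul_le_mul_of_nonneg_right (hS k) hzm0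
  have hkey : |z m| ≤ 3 * |c i| := by
    have h1 := hc m
    have h2 := hsum m
    have h3 : |c m| ≤ |c i| := hi m
    have : |z m| ≤ |c m| + abs (∑ j, S m j * |z j|) := by
      have := abs_add_le (c m) (∑ j, S m j * |z j|)
      have hz : z m = c m + ∑ j, S m j * |z j| := by linarith
      rw [hz]; exact this
    linarith
  -- off-diagonal bound
  have hSii : |S i i| ≤ 2 / 3 := by
    have := Finset.single_le_sum (f := fun j => |S i j|) (fun j _ => abs_nonneg _)
      (Finset.mem_univ i)
    linarith [hS i]
  have hsplit : |S i i| + ∑ j ∈ Finset.univ.erase i, |S i j| = ∑ j, |S i j| :=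
    Finset.add_sum_erase _ (fun j => |S i j|) (Finset.mem_univ i)
  have hoff : ∑ j ∈ Finset.univ.erase i, |S i j| < 1 / 3 := by
    have := hsdd i
    have := hS i
    linarith
  have hoff0 : 0 ≤ ∑ j ∈ Finset.univ.erase i, |S i j| :=
    Finset.sum_nonneg fun j _ => abs_nonneg _
  -- the residual
  set r : ℝ := ∑ j ∈ Finset.univ.erase i, S i j * |z j| with hr_def
  have hr : |r| ≤ (∑ j ∈ Finset.univ.erase i, |S i j|) * |z m| := by
    calc |r| ≤ ∑ j ∈ Finset.univ.erase i, abs (S i j * |z j|) := Finset.abs_sum_le_sum_abs _ _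
      _ ≤ ∑ j ∈ Finset.univ.erase i, |S i j| * |z m| := by
          apply Finset.sum_le_sum
          intro j _
          rw [abs_mul, abs_abs]
          exact mul_le_mul_of_nonneg_left (hzm j) (abs_nonneg _)
      _ = _ := (Finset.sum_mul _ _ _).symm
  have heq : z i - S i i * |z i| = c i + r := by
    have h1 := hc i
    have hsum_split : ∑ j, S i j * |z j| = S i i * |z i| + r :=
      (Finset.add_sum_erase _ (fun j => S i j * |z j|) (Finset.mem_univ i)).symm
    rw [hsum_split] at h1
    linarith
  by_cases hc0 : c i = 0
  · -- then all c = 0, z = 0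
    have hzm_zero : |z m| ≤ 0 := by
      have := hkey; rw [hc0] at this; simpa using this
    have hzi : z i = 0 := by
      have := hzm i
      have : |z i| ≤ 0 := le_trans this hzm_zero
      exact abs_eq_zero.mp (le_antisymm this (abs_nonneg _))
    rw [hzi, hc0]
  · have hci_pos : 0 < |c i| := abs_pos.mpr hc0
    have hr_lt : |r| < |c i| := by
      have h1 : (∑ j ∈ Finset.univ.erase i, |S i j|) * |z m|
          ≤ (∑ j ∈ Finset.univ.erase i, |S i j|) * (3 * |c i|) :=
        mul_le_mul_of_nonneg_left hkey hoff0
      nlinarith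
    have habs_r : -|c i| < r ∧ r < |c i| := abs_lt.mp hr_lt
    rcases lt_or_gt_of_ne hc0 with hneg | hpos
    · -- c i < 0, show z i < 0
      have hrhs : c i + r < 0 := by
        have : |c i| = -c i := abs_of_neg hneg
        linarith [habs_r.2, this]
      have hzi : z i < 0 := by
        by_contra hle
        push_neg at hle
        have : |z i| = z i := abs_of_nonneg hle
        rw [this] at heq
        nlinarith [abs_le.mp hSii]
      rw [Real.sign_of_neg hzi, Real.sign_of_neg hneg]
    · -- c i > 0, show z i > 0
      have hrhs : 0 < c i + r := by
        have : |c i| = c i := abs_of_pos hpos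
        linarith [habs_r.1, this]
      have hzi : 0 < z i := by
        by_contra hle
        push_neg at hle
        have : |z i| = -z i := abs_of_nonpos hle
        rw [this] at heq
        nlinarith [abs_le.mp hSii]
      rw [Real.sign_of_pos hzi, Real.sign_of_pos hpos]
end

section
/- Let S be a real (n+1)×(n+1) matrix with ‖S‖∞ ≤ ξ < 1, and let σ ∈ {+1, −1}. Define the n×n matrix S̄ by S̄_ij = S_{(i+1)(j+1)} − σ · S_{(i+1)0} · S_{0(j+1)} / (1 − σ · S_{00}) for i, j ∈ {0, …, n−1} (the matrix arising from one step of Gaussian elimination on I − SΣ with first sign σ; note 1 − σ·S_{00} > 0 since |S_{00}| < 1). Then ‖S̄‖∞ ≤ ξ. -/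
theorem stmt_15 {n : ℕ} (S : Matrix (Fin (n + 1)) (Fin (n + 1)) ℝ) (ξ : ℝ)
    (hS : ∀ i, ∑ j, |S i j| ≤ ξ) (hξ : ξ < 1)
    (σ : ℝ) (hσ : σ = 1 ∨ σ = -1)
    (Sb : Matrix (Fin n) (Fin n) ℝ)
    (hSb : ∀ i j : Fin n,
      Sb i j = S i.succ j.succ - σ * S i.succ 0 * S 0 j.succ / (1 - σ * S 0 0)) :
    ∀ i, ∑ j, |Sb i j| ≤ ξ := by
  intro i
  have hσabs : |σ| = 1 := by rcases hσ with h | h <;> simp [h]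
  have h0 : |S 0 0| + ∑ j : Fin n, |S 0 j.succ| ≤ ξ := by
    have := hS 0; rwa [Fin.sum_univ_succ] at this
  have hi : |S i.succ 0| + ∑ j : Fin n, |S i.succ j.succ| ≤ ξ := by
    have := hS i.succ; rwa [Fin.sum_univ_succ] at this
  have hC0 : 0 ≤ ∑ j : Fin n, |S 0 j.succ| :=
    Finset.sum_nonneg fun _ _ => abs_nonneg _
  have ha1 : |S 0 0| < 1 := by linarith
  have hle : σ * S 0 0 ≤ |S 0 0| := by
    calc σ * S 0 0 ≤ |σ * S 0 0| := le_abs_self _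
    _ = |S 0 0| := by rw [abs_mul, hσabs, one_mul]
  have hDpos : 0 < 1 - σ * S 0 0 := by linarith
  have key : ∑ j, |Sb i j| ≤ ∑ j : Fin n, (|S i.succ j.succ|
      + |S i.succ 0| / (1 - σ * S 0 0) * |S 0 j.succ|) := by
    apply Finset.sum_le_sum
    intro j _
    rw [hSb]
    refine (abs_sub _ _).trans ?_
    have : |σ * S i.succ 0 * S 0 j.succ / (1 - σ * S 0 0)|
        = |S i.succ 0| / (1 - σ * S 0 0) * |S 0 j.succ| := by
      rw [abs_div, abs_mul, abs_mul, hσabs, one_mul, abs_of_pos hDpos]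
      ring
    rw [this]
  rw [Finset.sum_add_distrib, ← Finset.mul_sum] at key
  have hfrac : |S i.succ 0| / (1 - σ * S 0 0) * (∑ j : Fin n, |S 0 j.succ|)
      ≤ |S i.succ 0| := by
    rw [div_mul_eq_mul_div, div_le_iff₀ hDpos]
    have hb : 0 ≤ |S i.succ 0| := abs_nonneg _
    nlinarith
  linarith
end

section
/- Let S be a real (n+1)×(n+1) matrix with ‖S‖∞ < 1 that is strictly diagonally dominant, and let σ ∈ {+1, −1}. Define the n×n matrix S̄ by S̄_ij = S_{(i+1)(j+1)} − σ · S_{(i+1)0} · S_{0(j+1)} / (1 − σ · S_{00}) for i, j ∈ {0, …, n−1}. Then S̄ is strictly diagonally dominant. -/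
theorem stmt_16 {n : ℕ} (S : Matrix (Fin (n + 1)) (Fin (n + 1)) ℝ)
    (hS : ∀ i, ∑ j, |S i j| < 1)
    (hsdd : ∀ i, ∑ j ∈ Finset.univ.erase i, |S i j| < |S i i|)
    (σ : ℝ) (hσ : σ = 1 ∨ σ = -1)
    (Sb : Matrix (Fin n) (Fin n) ℝ)
    (hSb : ∀ i j : Fin n,
      Sb i j = S i.succ j.succ - σ * S i.succ 0 * S 0 j.succ / (1 - σ * S 0 0)) :
    ∀ i, ∑ j ∈ Finset.univ.erase i, |Sb i j| < |Sb i i| := by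
  have hσ1 : |σ| = 1 := by rcases hσ with h | h <;> simp [h]
  have h00le : |S 0 0| ≤ ∑ j, |S 0 j| :=
    Finset.single_le_sum (f := fun j : Fin (n+1) => |S 0 j|) (fun j _ => abs_nonneg _) (Finset.mem_univ 0)
  have h00 : |S 0 0| < 1 := lt_of_le_of_lt h00le (hS 0)
  have hσS : σ * S 0 0 ≤ |S 0 0| := by
    calc σ * S 0 0 ≤ |σ * S 0 0| := le_abs_self _
    _ = |S 0 0| := by rw [abs_mul, hσ1, one_mul]
  set d := 1 - σ * S 0 0 with hd
  have hdpos : 0 < d := by rw [hd]; linarith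
  have hCd : ∑ j : Fin n, |S 0 j.succ| ≤ d := by
    have h0 := hS 0
    rw [Fin.sum_univ_succ] at h0
    rw [hd]
    linarith
  intro i
  have habs : ∀ j : Fin n, |σ * S i.succ 0 * S 0 j.succ / d|
      = |S i.succ 0| / d * |S 0 j.succ| := by
    intro j
    rw [abs_div, abs_mul, abs_mul, hσ1, one_mul, abs_of_pos hdpos]
    ring
  have key : ∀ j : Fin n, |Sb i j| ≤ |S i.succ j.succ| + |S i.succ 0| / d * |S 0 j.succ| := by
    intro j
    rw [hSb i j, ← habs j]
    exact abs_sub _ _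
  have keyd : |S i.succ i.succ| - |S i.succ 0| / d * |S 0 i.succ| ≤ |Sb i i| := by
    rw [hSb i i, ← habs i]
    exact abs_sub_abs_le_abs_sub _ _
  have hsum : ∑ j ∈ Finset.univ.erase i, |Sb i j|
      ≤ ∑ j ∈ Finset.univ.erase i, (|S i.succ j.succ| + |S i.succ 0| / d * |S 0 j.succ|) :=
    Finset.sum_le_sum fun j _ => key j
  rw [Finset.sum_add_distrib, ← Finset.mul_sum,
    Finset.sum_erase_eq_sub (Finset.mem_univ i) (f := fun j => |S i.succ j.succ|),
    Finset.sum_erase_eq_sub (Finset.mem_univ i) (f := fun j => |S 0 j.succ|),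
    mul_sub] at hsum
  have hrow := hsdd i.succ
  rw [Finset.sum_erase_eq_sub (Finset.mem_univ i.succ), Fin.sum_univ_succ] at hrow
  have ha : 0 ≤ |S i.succ 0| / d := div_nonneg (abs_nonneg _) hdpos.le
  have hac : |S i.succ 0| / d * (∑ j : Fin n, |S 0 j.succ|) ≤ |S i.succ 0| := by
    calc |S i.succ 0| / d * (∑ j : Fin n, |S 0 j.succ|) ≤ |S i.succ 0| / d * d :=
          mul_le_mul_of_nonneg_left hCd ha
    _ = |S i.succ 0| := by field_simp
  linarith
end

section
/- Let S be a real n×n matrix with ‖S‖∞ ≤ 1/2, and let z, ĉ ∈ ℝⁿ satisfy z − S|z| = ĉ. If i is an index with |ĉ_i| = max_k |ĉ_k| and sign(ĉ_i) ≠ sign(z_i), then z_i = 0. -/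
theorem stmt_18 {n : ℕ} (S : Matrix (Fin n) (Fin n) ℝ)
    (hS : ∀ i, ∑ j, |S i j| ≤ 1 / 2) (z c : Fin n → ℝ)
    (h : z - S.mulVec (fun i => |z i|) = c) :
    ∀ i, (∀ k, |c k| ≤ |c i|) → Real.sign (c i) ≠ Real.sign (z i) → z i = 0 := by
  intro i hmax hsign
  -- pick index attaining max of |z|
  obtain ⟨j, -, hj⟩ := Finset.exists_max_image (Finset.univ : Finset (Fin n))
    (fun k => |z k|) ⟨i, Finset.mem_univ i⟩
  have hj' : ∀ k, |z k| ≤ |z j| := fun k => hj k (Finset.mem_univ k)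
  set Z := |z j| with hZ
  have hZ0 : 0 ≤ Z := abs_nonneg _
  -- bound on the mulVec term for any row k
  have key : ∀ k, |S.mulVec (fun m => |z m|) k| ≤ Z / 2 := by
    intro k
    have h1 : abs (∑ m, S k m * |z m|) ≤ ∑ m, |S k m| * Z := by
      refine (Finset.abs_sum_le_sum_abs _ _).trans (Finset.sum_le_sum fun m _ => ?_)
      rw [abs_mul, abs_abs]
      exact mul_le_mul_of_nonneg_left (hj' m) (abs_nonneg _)
    have h2 : ∑ m, |S k m| * Z ≤ (1/2) * Z := by
      rw [← Finset.sum_mul]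
      exact mul_le_mul_of_nonneg_right (hS k) hZ0
    simpa [Matrix.mulVec, dotProduct, div_eq_inv_mul] using h1.trans h2
  have hc : ∀ k, c k = z k - S.mulVec (fun m => |z m|) k := by
    intro k; rw [← h]; simp
  -- Z ≤ 2 |c i|
  have hZle : Z ≤ 2 * |c i| := by
    have : |z j| ≤ |c j| + Z / 2 := by
      have := key j
      have := abs_sub_abs_le_abs_sub (z j) (S.mulVec (fun m => |z m|) j)
      calc |z j| ≤ |z j - S.mulVec (fun m => |z m|) j| + |S.mulVec (fun m => |z m|) j| := by
            have := abs_sub (z j) (S.mulVec (fun m => |z m|) j); nlinarith [abs_sub_abs_le_abs_sub (z j) (S.mulVec (fun m => |z m|) j), key j, abs_nonneg (S.mulVec (fun m => |z m|) j)]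
        _ ≤ |c j| + Z / 2 := by rw [← hc j]; linarith [key j]
    have := hmax j
    linarith
  have hkey : |z i - c i| ≤ |c i| := by
    have h1 : z i - c i = S.mulVec (fun m => |z m|) i := by rw [hc i]; ring
    rw [h1]; linarith [key i]
  rcases lt_trichotomy (c i) 0 with hci | hci | hci
  · -- c i < 0 : z i ≤ 0; if z i < 0 signs agree
    have hzle : z i ≤ 0 := by
      have := abs_le.mp hkey
      rw [abs_of_neg hci] at this
      linarith [this.2]
    rcases hzle.lt_or_eq with hlt | heq
    · exact absurd (by rw [Real.sign_of_neg hci, Real.sign_of_neg hlt]) hsign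
    · exact heq
  · -- c i = 0 : all c zero, so Z ≤ 0, z = 0
    have : Z ≤ 0 := by rw [hci] at hZle; simpa using hZle
    have : |z i| ≤ 0 := (hj' i).trans this
    exact abs_eq_zero.mp (le_antisymm this (abs_nonneg _))
  · -- c i > 0 : z i ≥ 0
    have hzge : 0 ≤ z i := by
      have := abs_le.mp hkey
      rw [abs_of_pos hci] at this
      linarith [this.1]
    rcases hzge.lt_or_eq with hlt | heq
    · exact absurd (by rw [Real.sign_of_pos hci, Real.sign_of_pos hlt]) hsign
    · exact heq.symm
end

section
/- For every n ≥ 2 there exist a strictly diagonally dominant real n×n matrix S with ‖S‖∞ = 2/3 + 1/(3(n+1)) and a vector z ∈ ℝⁿ such that, setting ĉ = z − S|z|, one has z_1 > 0, ĉ_1 < 0, and |ĉ_1| > |ĉ_j| for all j ≠ 1 (so the entry of ĉ of maximal absolute value has a sign different from the corresponding entry of z, which is nonzero). In particular, the norm bound 2/3 in the sign-coincidence result for strictly diagonally dominant matrices cannot be relaxed to 2/3 + 1/(3(n+1)). -/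
lemma aux_stmt19 (m : ℕ) (a b d t : ℝ)
    (ha : 0 < a) (hb : 0 < b) (hd : 0 < d) (ht : 0 < t)
    (hdom : ((m:ℝ)+1) * d < a)
    (hrow : ((m:ℝ)+1) * d + a = b)
    (hbval : b = 2 / 3 + 1 / (3 * ((m + 2 : ℕ) + 1 : ℝ)))
    (hb1 : b < 1)
    (hc0 : t < a * t + ((m:ℝ)+1) * d)
    (hmax : 1 - b < (a * t + ((m:ℝ)+1) * d) - t) :
    ∃ (S : Matrix (Fin (m + 2)) (Fin (m + 2)) ℝ) (z : Fin (m + 2) → ℝ),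
      (∀ i, ∑ j ∈ Finset.univ.erase i, |S i j| < |S i i|) ∧
      (∀ i, ∑ j, |S i j| ≤ 2 / 3 + 1 / (3 * ((m + 2 : ℕ) + 1 : ℝ))) ∧
      (∃ i, ∑ j, |S i j| = 2 / 3 + 1 / (3 * ((m + 2 : ℕ) + 1 : ℝ))) ∧
      (∃ c : Fin (m + 2) → ℝ, c = z - S.mulVec (fun i => |z i|) ∧
        0 < z 0 ∧ c 0 < 0 ∧ ∀ j : Fin (m + 2), j ≠ 0 → |c j| < |c 0|) := by
  set S : Matrix (Fin (m + 2)) (Fin (m + 2)) ℝ :=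
    fun i j => if i = 0 then (if j = 0 then a else d) else (if j = i then b else 0) with hS
  set z : Fin (m + 2) → ℝ := fun j => if j = 0 then t else 1 with hz
  have erase0 : ∑ j ∈ Finset.univ.erase (0 : Fin (m+2)), |S 0 j| = ((m : ℝ) + 1) * d := by
    have hc : ∀ j ∈ Finset.univ.erase (0 : Fin (m+2)), |S 0 j| = d := by
      intro j hj
      have hj0 : j ≠ 0 := Finset.ne_of_mem_erase hj
      simp [hS, hj0, abs_of_pos hd]
    rw [Finset.sum_congr rfl hc, Finset.sum_const, Finset.card_erase_of_mem (Finset.mem_univ _),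
      Finset.card_univ, Fintype.card_fin]
    simp [nsmul_eq_mul]
  have erasei : ∀ i : Fin (m+2), i ≠ 0 → ∑ j ∈ Finset.univ.erase i, |S i j| = 0 := by
    intro i hi
    apply Finset.sum_eq_zero
    intro j hj
    have hji : j ≠ i := Finset.ne_of_mem_erase hj
    simp [hS, hi, hji]
  have sum0 : ∑ j, |S 0 j| = ((m : ℝ) + 1) * d + a := by
    rw [← Finset.sum_erase_add _ _ (Finset.mem_univ (0 : Fin (m+2))), erase0]
    simp [hS, abs_of_pos ha]
  have sumi : ∀ i : Fin (m+2), i ≠ 0 → ∑ j, |S i j| = b := by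
    intro i hi
    rw [← Finset.sum_erase_add _ _ (Finset.mem_univ i), erasei i hi]
    simp [hS, hi, abs_of_pos hb]
  have mv0 : S.mulVec (fun i => |z i|) 0 = a * t + ((m : ℝ) + 1) * d := by
    simp only [Matrix.mulVec, dotProduct]
    rw [← Finset.sum_erase_add _ _ (Finset.mem_univ (0 : Fin (m+2)))]
    have hc : ∀ j ∈ Finset.univ.erase (0 : Fin (m+2)), S 0 j * |z j| = d := by
      intro j hj
      have hj0 : j ≠ 0 := Finset.ne_of_mem_erase hj
      simp [hS, hz, hj0]
    rw [Finset.sum_congr rfl hc, Finset.sum_const, Finset.card_erase_of_mem (Finset.mem_univ _),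
      Finset.card_univ, Fintype.card_fin]
    simp [hS, hz, abs_of_pos ht, nsmul_eq_mul]
    ring
  have mvi : ∀ i : Fin (m+2), i ≠ 0 → S.mulVec (fun i => |z i|) i = b := by
    intro i hi
    simp only [Matrix.mulVec, dotProduct]
    rw [← Finset.sum_erase_add _ _ (Finset.mem_univ i)]
    have hc : ∀ j ∈ Finset.univ.erase i, S i j * |z j| = 0 := by
      intro j hj
      have hji : j ≠ i := Finset.ne_of_mem_erase hj
      simp [hS, hji, hi]
    rw [Finset.sum_congr rfl hc, Finset.sum_const]
    simp [hS, hz, hi]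
  refine ⟨S, z, ?_, ?_, ?_, ?_⟩
  · intro i
    by_cases hi : i = 0
    · subst hi
      rw [erase0]
      have h00 : S 0 0 = a := by simp [hS]
      rw [h00, abs_of_pos ha]
      exact hdom
    · rw [erasei i hi]
      have hii : S i i = b := by simp [hS, hi]
      rw [hii, abs_of_pos hb]
      exact hb
  · intro i
    by_cases hi : i = 0
    · subst hi; rw [sum0, hrow, hbval]
    · rw [sumi i hi, hbval]
  · exact ⟨0, by rw [sum0, hrow, hbval]⟩
  · refine ⟨z - S.mulVec (fun i => |z i|), rfl, by simp [hz, ht], ?_, ?_⟩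
    · have h0 : (z - S.mulVec (fun i => |z i|)) 0 = t - (a * t + ((m : ℝ) + 1) * d) := by
        rw [Pi.sub_apply, mv0]; simp [hz]
      rw [h0]
      linarith
    · intro j hj
      have hcj : (z - S.mulVec (fun i => |z i|)) j = 1 - b := by
        rw [Pi.sub_apply, mvi j hj]; simp [hz, hj]
      have hc0' : (z - S.mulVec (fun i => |z i|)) 0 = t - (a * t + ((m : ℝ) + 1) * d) := by
        rw [Pi.sub_apply, mv0]; simp [hz]
      rw [hcj, hc0']
      rw [abs_of_pos (by linarith : (0:ℝ) < 1 - b),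
        abs_of_neg (by linarith : t - (a * t + ((m:ℝ)+1) * d) < 0)]
      linarith

theorem stmt_19 (m : ℕ) :
    ∃ (S : Matrix (Fin (m + 2)) (Fin (m + 2)) ℝ) (z : Fin (m + 2) → ℝ),
      (∀ i, ∑ j ∈ Finset.univ.erase i, |S i j| < |S i i|) ∧
      (∀ i, ∑ j, |S i j| ≤ 2 / 3 + 1 / (3 * ((m + 2 : ℕ) + 1 : ℝ))) ∧
      (∃ i, ∑ j, |S i j| = 2 / 3 + 1 / (3 * ((m + 2 : ℕ) + 1 : ℝ))) ∧
      (∃ c : Fin (m + 2) → ℝ, c = z - S.mulVec (fun i => |z i|) ∧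
        0 < z 0 ∧ c 0 < 0 ∧ ∀ j : Fin (m + 2), j ≠ 0 → |c j| < |c 0|) := by
  have hM : (0:ℝ) ≤ (m:ℝ) := Nat.cast_nonneg m
  obtain ⟨N, hNdef⟩ : ∃ N : ℝ, N = (m : ℝ) + 3 := ⟨_, rfl⟩
  have hN3 : (3 : ℝ) ≤ N := by rw [hNdef]; linarith
  have hN0 : (0 : ℝ) < N := by linarith
  have hm1 : (0 : ℝ) < (m:ℝ) + 1 := by linarith
  obtain ⟨b, hbdef⟩ : ∃ b : ℝ, b = (2 * N + 1) / (3 * N) := ⟨_, rfl⟩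
  obtain ⟨t, htdef⟩ : ∃ t : ℝ, t = 1 / (8 * N) := ⟨_, rfl⟩
  obtain ⟨a, hadef⟩ : ∃ a : ℝ, a = b / 2 + t := ⟨_, rfl⟩
  obtain ⟨d, hddef⟩ : ∃ d : ℝ, d = (b / 2 - t) / ((m : ℝ) + 1) := ⟨_, rfl⟩
  have hbN : 3 * N * b = 2 * N + 1 := by rw [hbdef]; field_simp
  have htN : 8 * N * t = 1 := by rw [htdef]; field_simp
  have hb : (0 : ℝ) < b := by rw [hbdef]; positivity
  have hb1 : b < 1 := by nlinarith
  have ht : (0 : ℝ) < t := by rw [htdef]; positivity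
  have hhalf : 2 * t < b / 2 := by nlinarith
  have hd0 : (0 : ℝ) < b / 2 - t := by nlinarith
  have hd : (0 : ℝ) < d := by rw [hddef]; positivity
  have ha : (0 : ℝ) < a := by rw [hadef]; positivity
  have ha1 : a < 1 := by nlinarith
  have hmd : ((m : ℝ) + 1) * d = b / 2 - t := by
    rw [hddef]; field_simp
  have hat : 0 < a * t := mul_pos ha ht
  have hat1 : a * t < t := by nlinarith
  apply aux_stmt19 m a b d t ha hb hd ht
  · rw [hmd, hadef]; linarith
  · rw [hmd, hadef]; ring
  · rw [hbdef, hNdef]; push_cast; field_simp; ring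
  · exact hb1
  · rw [hmd]; linarith
  · rw [hmd]
    have hkey : 1 - b < b / 2 - 2 * t := by nlinarith
    linarith
end
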